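/- arXiv:1705.09370 — 10 statements merged into one kernel-verified Lean document; each statement's English description precedes it below -/
import Mathlib

section
/- For any 2-colouring of the edges of the complete graph K_n (n ≥ 1), there exists a colour c such that the monochromatic subgraph in colour c is connected on all n vertices and has diameter at most 3. -/
/-- The monochromatic subgraph `K_n[c]` of a `k`-colouring of the edges of `Kₙ`:
vertices are all of `Fin n`, edges are those of colour `c`. -/
def monoGraph {n k : ℕ} (χ : Sym2 (Fin n) → Fin k) (c : Fin k) : SimpleGraph (Fin n) where
  Adj x y := x ≠ y ∧ χ s(x, y) = c
  symm := by
    constructor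
    intro x y h
    exact ⟨h.1.symm, by rw [Sym2.eq_swap]; exact h.2⟩
  loopless := by constructor; intro x h; exact h.1 rfl

lemma keyWalk {n : ℕ} (χ : Sym2 (Fin n) → Fin 2) (a b : Fin n) (hab : a ≠ b)
    (h1 : ¬ (monoGraph χ 0).Adj a b)
    (h2 : ∀ x, ¬((monoGraph χ 0).Adj a x ∧ (monoGraph χ 0).Adj x b)) :
    ∀ x y : Fin n, ∃ w : (monoGraph χ 1).Walk x y, w.length ≤ 3 := by
  have hcol : ∀ e : Sym2 (Fin n), χ e ≠ 0 → χ e = 1 := by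
    intro e he; omega
  have hHab : (monoGraph χ 1).Adj a b := by
    refine ⟨hab, hcol _ ?_⟩
    intro hc; exact h1 ⟨hab, hc⟩
  have step : ∀ x, x ≠ a → (monoGraph χ 1).Adj x a ∨ (monoGraph χ 1).Adj x b := by
    intro x hx
    by_cases hc : χ s(x, a) = 0
    · right
      have hxb : x ≠ b := by
        rintro rfl
        exact h1 ⟨hab, by rwa [Sym2.eq_swap] at hc⟩
      refine ⟨hxb, hcol _ ?_⟩
      intro hc2
      exact h2 x ⟨⟨hx.symm, by rwa [Sym2.eq_swap] at hc⟩, ⟨hxb, hc2⟩⟩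
    · left; exact ⟨hx, hcol _ hc⟩
  intro x y
  by_cases hxy : x = y
  · subst hxy; exact ⟨SimpleGraph.Walk.nil, by simp⟩
  by_cases hxa : x = a
  · subst hxa
    rcases step y (Ne.symm hxy) with h | h
    · exact ⟨SimpleGraph.Walk.cons h.symm SimpleGraph.Walk.nil, by simp⟩
    · exact ⟨SimpleGraph.Walk.cons hHab (SimpleGraph.Walk.cons h.symm SimpleGraph.Walk.nil), by simp⟩
  by_cases hya : y = a
  · subst hya
    rcases step x hxa with h | h
    · exact ⟨SimpleGraph.Walk.cons h SimpleGraph.Walk.nil, by simp⟩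
    · exact ⟨SimpleGraph.Walk.cons h (SimpleGraph.Walk.cons hHab.symm SimpleGraph.Walk.nil), by simp⟩
  rcases step x hxa with hx | hx <;> rcases step y hya with hy | hy
  · exact ⟨SimpleGraph.Walk.cons hx (SimpleGraph.Walk.cons hy.symm SimpleGraph.Walk.nil), by simp⟩
  · exact ⟨SimpleGraph.Walk.cons hx (SimpleGraph.Walk.cons hHab
      (SimpleGraph.Walk.cons hy.symm SimpleGraph.Walk.nil)), by simp⟩
  · exact ⟨SimpleGraph.Walk.cons hx (SimpleGraph.Walk.cons hHab.symm
      (SimpleGraph.Walk.cons hy.symm SimpleGraph.Walk.nil)), by simp⟩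
  · exact ⟨SimpleGraph.Walk.cons hx (SimpleGraph.Walk.cons hy.symm SimpleGraph.Walk.nil), by simp⟩

/-- For any 2-colouring of `E(Kₙ)` (`n ≥ 1`) there is a colour whose monochromatic
subgraph is connected and of diameter at most 3. -/
theorem stmt0 (n : ℕ) (hn : 1 ≤ n) (χ : Sym2 (Fin n) → Fin 2) :
    ∃ c : Fin 2, (monoGraph χ c).Connected ∧
      ∀ x y : Fin n, (monoGraph χ c).dist x y ≤ 3 := by
  have hne : Nonempty (Fin n) := ⟨⟨0, hn⟩⟩
  by_cases h : (monoGraph χ 0).Connected ∧ ∀ x y : Fin n, (monoGraph χ 0).dist x y ≤ 3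
  · exact ⟨0, h⟩
  -- extract a bad pair
  have badpair : ∃ a b : Fin n, a ≠ b ∧ ¬ (monoGraph χ 0).Adj a b ∧
      ∀ x, ¬((monoGraph χ 0).Adj a x ∧ (monoGraph χ 0).Adj x b) := by
    rw [not_and_or] at h
    rcases h with h | h
    · rw [SimpleGraph.connected_iff] at h
      push_neg at h
      have hpc : ¬ (monoGraph χ 0).Preconnected := fun hp => (h hp).false ⟨0, hn⟩
      simp only [SimpleGraph.Preconnected] at hpc
      push_neg at hpc
      obtain ⟨a, b, hr⟩ := hpc
      refine ⟨a, b, ?_, fun hadj => hr hadj.reachable, ?_⟩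
      · rintro rfl; exact hr (SimpleGraph.Reachable.refl a)
      · rintro x ⟨h1, h2⟩
        exact hr (h1.reachable.trans h2.reachable)
    · push_neg at h
      obtain ⟨a, b, hd⟩ := h
      refine ⟨a, b, ?_, ?_, ?_⟩
      · rintro rfl; rw [SimpleGraph.dist_self] at hd; omega
      · intro hadj
        have := SimpleGraph.dist_le (SimpleGraph.Walk.cons hadj SimpleGraph.Walk.nil)
        simp at this; omega
      · rintro x ⟨h1, h2⟩
        have := SimpleGraph.dist_le (SimpleGraph.Walk.cons h1 (SimpleGraph.Walk.cons h2 SimpleGraph.Walk.nil))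
        simp at this; omega
  obtain ⟨a, b, hab, h1, h2⟩ := badpair
  have key := keyWalk χ a b hab h1 h2
  refine ⟨1, (SimpleGraph.connected_iff _).mpr ⟨fun x y => (key x y).choose.reachable, hne⟩, fun x y => ?_⟩
  · obtain ⟨w, hw⟩ := key x y
    exact le_trans (SimpleGraph.dist_le w) hw
end

section
/- For any 3-colouring of the edges of the complete graph K_n, there exist (not necessarily distinct) colours c₁, c₂ and vertex sets A₁, A₂ with A₁ ∪ A₂ = V(K_n) such that for each i ∈ {1,2}, the subgraph on vertex set A_i consisting of the edges of colour c_i within A_i is connected and has diameter at most 8. -/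
namespace Stmt1Aux

open SimpleGraph

variable {n : ℕ} (χ : Sym2 (Fin n) → Fin 3)

/-- ball of radius r around u in colour c -/
def ball (c : Fin 3) (u : Fin n) (r : ℕ) : Set (Fin n) :=
  {x | ∃ p : (monoGraph χ c).Walk u x, p.length ≤ r}

lemma self_mem_ball (c : Fin 3) (u : Fin n) (r : ℕ) : u ∈ ball χ c u r :=
  ⟨SimpleGraph.Walk.nil, by simp⟩

lemma extend {c : Fin 3} {u x : Fin n} {r : ℕ} (hx : x ∈ ball χ c u r) {y : Fin n}
    (hxy : x ≠ y) (hc : χ s(x, y) = c) : y ∈ ball χ c u (r + 1) := by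
  obtain ⟨p, hp⟩ := hx
  exact ⟨p.concat (show (monoGraph χ c).Adj x y from ⟨hxy, hc⟩), by rw [SimpleGraph.Walk.length_concat]; omega⟩

lemma ball_mono {c : Fin 3} {u : Fin n} {r r' : ℕ} (h : r ≤ r') :
    ball χ c u r ⊆ ball χ c u r' := fun x ⟨p, hp⟩ => ⟨p, hp.trans h⟩

lemma extend' {c : Fin 3} {u x : Fin n} {r r' : ℕ} (hx : x ∈ ball χ c u r) {y : Fin n}
    (hxy : x ≠ y) (hc : χ s(x, y) = c) (hr : r + 1 ≤ r') : y ∈ ball χ c u r' :=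
  ball_mono χ hr (extend χ hx hxy hc)

lemma not_edge {c : Fin 3} {u x y : Fin n} {r : ℕ} (hy : y ∉ ball χ c u (r + 1))
    (hx : x ∈ ball χ c u r) (hxy : x ≠ y) : χ s(x, y) ≠ c :=
  fun hc => hy (extend χ hx hxy hc)

/-- lift a walk whose support lies in A to the induced graph -/
lemma lift_walk {G : SimpleGraph (Fin n)} {A : Set (Fin n)} :
    ∀ {x y : Fin n} (p : G.Walk x y) (hp : ∀ z ∈ p.support, z ∈ A)
      (hx : x ∈ A) (hy : y ∈ A),
      ∃ q : (G.induce A).Walk ⟨x, hx⟩ ⟨y, hy⟩, q.length = p.length := by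
  intro x y p
  induction p with
  | nil => intro _ hx hy; exact ⟨SimpleGraph.Walk.nil, rfl⟩
  | @cons x m y h p ih =>
    intro hp hx hy
    have hm : m ∈ A := hp m (by simp [SimpleGraph.Walk.support_cons])
    obtain ⟨q, hq⟩ := ih (fun z hz => hp z (by simp [SimpleGraph.Walk.support_cons, hz])) hm hy
    have hadj : (G.induce A).Adj ⟨x, hx⟩ ⟨m, hm⟩ := h
    exact ⟨SimpleGraph.Walk.cons hadj q, by simp [hq]⟩

/-- every member of the ball is reachable within the induced ball -/
lemma ball_reach {c : Fin 3} {u : Fin n} {r : ℕ} {x : Fin n} (hx : x ∈ ball χ c u r) :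
    ∃ q : ((monoGraph χ c).induce (ball χ c u r)).Walk
      ⟨u, self_mem_ball χ c u r⟩ ⟨x, hx⟩, q.length ≤ r := by
  classical
  obtain ⟨p, hp⟩ := hx
  have hsupp : ∀ z ∈ p.support, z ∈ ball χ c u r := by
    intro z hz
    exact ⟨p.takeUntil z hz, (p.length_takeUntil_le hz).trans hp⟩
  obtain ⟨q, hq⟩ := lift_walk p hsupp (self_mem_ball χ c u r) ⟨p, hp⟩
  exact ⟨q, by omega⟩

lemma ball_good (c : Fin 3) (u : Fin n) :
    ((monoGraph χ c).induce (ball χ c u 4)).Preconnected ∧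
    ∀ x y : (ball χ c u 4),
      ((monoGraph χ c).induce (ball χ c u 4)).dist x y ≤ 8 := by
  constructor
  · rintro ⟨x, hx⟩ ⟨y, hy⟩
    obtain ⟨qx, _⟩ := ball_reach χ hx
    obtain ⟨qy, _⟩ := ball_reach χ hy
    exact ⟨qx.reverse.append qy⟩
  · rintro ⟨x, hx⟩ ⟨y, hy⟩
    obtain ⟨qx, hqx⟩ := ball_reach χ hx
    obtain ⟨qy, hqy⟩ := ball_reach χ hy
    calc ((monoGraph χ c).induce (ball χ c u 4)).dist ⟨x, hx⟩ ⟨y, hy⟩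
        ≤ (qx.reverse.append qy).length := SimpleGraph.dist_le _
      _ = qx.length + qy.length := by
          rw [SimpleGraph.Walk.length_append, SimpleGraph.Walk.length_reverse]
      _ ≤ 8 := by omega

/-- main combinatorial lemma -/
lemma cover_main (a : Fin n) :
    ∃ (c₁ c₂ : Fin 3) (u₁ u₂ : Fin n),
      ∀ x, x ∈ ball χ c₁ u₁ 4 ∨ x ∈ ball χ c₂ u₂ 4 := by
  by_cases h0 : ∀ x, x ∈ ball χ 0 a 4
  · exact ⟨0, 0, a, a, fun x => Or.inl (h0 x)⟩
  push_neg at h0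
  obtain ⟨b, hb⟩ := h0
  have hab : a ≠ b := by rintro rfl; exact hb (self_mem_ball χ 0 a 4)
  obtain ⟨q, hqdef⟩ : ∃ q, χ s(a, b) = q := ⟨_, rfl⟩
  have hq0 : q ≠ 0 := by
    rintro rfl
    exact hb (extend' χ (self_mem_ball χ 0 a 0) hab hqdef (by omega))
  obtain ⟨s, hs0, hsq, htri⟩ : ∃ s : Fin 3, s ≠ 0 ∧ s ≠ q ∧ ∀ c : Fin 3, c = 0 ∨ c = q ∨ c = s := by
    fin_cases q
    · exact absurd rfl hq0
    · exact ⟨2, by decide, by decide, by decide⟩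
    · exact ⟨1, by decide, by decide, by decide⟩
  -- no vertex is 0-adjacent to both a and b
  have hno0 : ∀ z, z ≠ a → z ≠ b → ¬(χ s(z, a) = 0 ∧ χ s(z, b) = 0) := by
    rintro z hza hzb ⟨h1, h2⟩
    have h1' : z ∈ ball χ 0 a 1 :=
      extend χ (self_mem_ball χ 0 a 0) (Ne.symm hza) (by rw [Sym2.eq_swap]; exact h1)
    exact hb (extend' χ h1' hzb h2 (by omega))
  have hbq : b ∈ ball χ q a 1 := extend χ (self_mem_ball χ q a 0) hab hqdef
  have haq : a ∈ ball χ q b 1 :=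
    extend χ (self_mem_ball χ q b 0) hab.symm (by rw [Sym2.eq_swap]; exact hqdef)
  by_cases hA : ∀ x, x ∈ ball χ q a 4 ∨ x ∈ ball χ s a 4
  · exact ⟨q, s, a, a, hA⟩
  push_neg at hA
  obtain ⟨t, htq, hts⟩ := hA
  have hta : t ≠ a := by rintro rfl; exact htq (self_mem_ball χ q t 4)
  have htb : t ≠ b := by rintro rfl; exact htq (ball_mono χ (by omega) hbq)
  have hta_0 : χ s(t, a) = 0 := by
    rcases htri (χ s(t, a)) with h | h | h
    · exact h
    · exact absurd (extend' χ (self_mem_ball χ q a 0) (Ne.symm hta)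
        (by rw [Sym2.eq_swap]; exact h) (by omega) : t ∈ ball χ q a 4) htq
    · exact absurd (extend' χ (self_mem_ball χ s a 0) (Ne.symm hta)
        (by rw [Sym2.eq_swap]; exact h) (by omega) : t ∈ ball χ s a 4) hts
  have htb_s : χ s(t, b) = s := by
    rcases htri (χ s(t, b)) with h | h | h
    · exact absurd ⟨hta_0, h⟩ (hno0 t hta htb)
    · exact absurd (extend' χ hbq htb.symm (by rw [Sym2.eq_swap]; exact h) (by omega)
        : t ∈ ball χ q a 4) htq
    · exact h
  by_cases hB : ∀ x, x ∈ ball χ q b 4 ∨ x ∈ ball χ s b 4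
  · exact ⟨q, s, b, b, hB⟩
  push_neg at hB
  obtain ⟨t', ht'q, ht's⟩ := hB
  have ht'b : t' ≠ b := by rintro rfl; exact ht'q (self_mem_ball χ q t' 4)
  have ht'a : t' ≠ a := by rintro rfl; exact ht'q (ball_mono χ (by omega) haq)
  have ht'b_0 : χ s(t', b) = 0 := by
    rcases htri (χ s(t', b)) with h | h | h
    · exact h
    · exact absurd (extend' χ (self_mem_ball χ q b 0) (Ne.symm ht'b)
        (by rw [Sym2.eq_swap]; exact h) (by omega) : t' ∈ ball χ q b 4) ht'q
    · exact absurd (extend' χ (self_mem_ball χ s b 0) (Ne.symm ht'b)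
        (by rw [Sym2.eq_swap]; exact h) (by omega) : t' ∈ ball χ s b 4) ht's
  have ht'a_s : χ s(t', a) = s := by
    rcases htri (χ s(t', a)) with h | h | h
    · exact absurd ⟨h, ht'b_0⟩ (hno0 t' ht'a ht'b)
    · exact absurd (extend' χ haq ht'a.symm (by rw [Sym2.eq_swap]; exact h) (by omega)
        : t' ∈ ball χ q b 4) ht'q
    · exact h
  have ht_in : t ∈ ball χ s b 1 := extend χ (self_mem_ball χ s b 0) (Ne.symm htb)
    (by rw [Sym2.eq_swap]; exact htb_s)
  have ht'_in : t' ∈ ball χ s a 1 := extend χ (self_mem_ball χ s a 0) (Ne.symm ht'a)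
    (by rw [Sym2.eq_swap]; exact ht'a_s)
  -- final claim: s-balls around a and b cover
  refine ⟨s, s, a, b, fun x => ?_⟩
  by_cases hxa : x = a
  · exact Or.inl (by rw [hxa]; exact self_mem_ball χ s a 4)
  by_cases hxb : x = b
  · exact Or.inr (by rw [hxb]; exact self_mem_ball χ s b 4)
  -- if x has an s-edge to a or b we are done immediately
  rcases htri (χ s(x, a)) with hca | hca | hca
  rotate_left
  · -- χ(x,a) = q : x ∈ ball q a 1 and ball q b 2
    have hxqa : x ∈ ball χ q a 1 := extend χ (self_mem_ball χ q a 0) (Ne.symm hxa)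
      (by rw [Sym2.eq_swap]; exact hca)
    have hxqb : x ∈ ball χ q b 2 := extend χ haq (Ne.symm hxa)
      (by rw [Sym2.eq_swap]; exact hca)
    have hxt : x ≠ t := by rintro rfl; exact hq0 (hca.symm.trans hta_0)
    have hxt' : x ≠ t' := by rintro rfl; exact hsq (ht'a_s.symm.trans hca)
    have hq_xt : χ s(x, t) ≠ q := not_edge χ (r := 3) htq (ball_mono χ (by omega) hxqa) hxt
    rcases htri (χ s(x, t)) with hxt0 | hxtq | hxts
    rotate_left
    · exact absurd hxtq hq_xt
    · exact Or.inr (extend' χ ht_in (Ne.symm hxt) (by rw [Sym2.eq_swap]; exact hxts) (by omega))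
    have hq_xt' : χ s(x, t') ≠ q := not_edge χ (r := 3) ht'q (ball_mono χ (by omega) hxqb) hxt'
    rcases htri (χ s(x, t')) with hxt'0 | hxt'q | hxt's
    rotate_left
    · exact absurd hxt'q hq_xt'
    · exact Or.inl (extend' χ ht'_in (Ne.symm hxt') (by rw [Sym2.eq_swap]; exact hxt's) (by omega))
    · -- 0-walk a - t - x - t' - b : contradiction
      have w1 : t ∈ ball χ 0 a 1 := extend χ (self_mem_ball χ 0 a 0) (Ne.symm hta)
        (by rw [Sym2.eq_swap]; exact hta_0)
      have w2 : x ∈ ball χ 0 a 2 := extend χ w1 (Ne.symm hxt)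
        (by rw [Sym2.eq_swap]; exact hxt0)
      have w3 : t' ∈ ball χ 0 a 3 := extend χ w2 hxt' hxt'0
      have w4 : b ∈ ball χ 0 a 4 := extend χ w3 ht'b ht'b_0
      exact absurd w4 hb
  · -- χ(x,a) = s
    exact Or.inl (extend' χ (self_mem_ball χ s a 0) (Ne.symm hxa)
      (by rw [Sym2.eq_swap]; exact hca) (by omega))
  · -- χ(x,a) = 0
    rcases htri (χ s(x, b)) with hcb | hcb | hcb
    · exact absurd ⟨hca, hcb⟩ (hno0 x hxa hxb)
    rotate_left
    · -- χ(x,b) = s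
      exact Or.inr (extend' χ (self_mem_ball χ s b 0) (Ne.symm hxb)
        (by rw [Sym2.eq_swap]; exact hcb) (by omega))
    · -- χ(x,b) = q : x ∈ ball q a 2 and ball q b 1
      have hxqa : x ∈ ball χ q a 2 := extend χ hbq (Ne.symm hxb)
        (by rw [Sym2.eq_swap]; exact hcb)
      have hxqb : x ∈ ball χ q b 1 := extend χ (self_mem_ball χ q b 0) (Ne.symm hxb)
        (by rw [Sym2.eq_swap]; exact hcb)
      have hxt : x ≠ t := by rintro rfl; exact hsq (htb_s.symm.trans hcb)
      have hxt' : x ≠ t' := by rintro rfl; exact hs0 (ht'a_s.symm.trans hca)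
      have hq_xt : χ s(x, t) ≠ q := not_edge χ (r := 3) htq (ball_mono χ (by omega) hxqa) hxt
      rcases htri (χ s(x, t)) with hxt0 | hxtq | hxts
      rotate_left
      · exact absurd hxtq hq_xt
      · exact Or.inr (extend' χ ht_in (Ne.symm hxt) (by rw [Sym2.eq_swap]; exact hxts) (by omega))
      have hq_xt' : χ s(x, t') ≠ q := not_edge χ (r := 3) ht'q (ball_mono χ (by omega) hxqb) hxt'
      rcases htri (χ s(x, t')) with hxt'0 | hxt'q | hxt's
      rotate_left
      · exact absurd hxt'q hq_xt'
      · exact Or.inl (extend' χ ht'_in (Ne.symm hxt')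
          (by rw [Sym2.eq_swap]; exact hxt's) (by omega))
      · have w1 : t ∈ ball χ 0 a 1 := extend χ (self_mem_ball χ 0 a 0) (Ne.symm hta)
          (by rw [Sym2.eq_swap]; exact hta_0)
        have w2 : x ∈ ball χ 0 a 2 := extend χ w1 (Ne.symm hxt)
          (by rw [Sym2.eq_swap]; exact hxt0)
        have w3 : t' ∈ ball χ 0 a 3 := extend χ w2 hxt' hxt'0
        have w4 : b ∈ ball χ 0 a 4 := extend χ w3 ht'b ht'b_0
        exact absurd w4 hb

end Stmt1Aux

/-- For any 3-colouring of `E(Kₙ)` there are colours `c₁, c₂` and sets `A₁, A₂`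
covering the vertices such that each `K_n[A_i, c_i]` is connected of diameter at most 8. -/
theorem stmt1 (n : ℕ) (χ : Sym2 (Fin n) → Fin 3) :
    ∃ (c₁ c₂ : Fin 3) (A₁ A₂ : Set (Fin n)),
      A₁ ∪ A₂ = Set.univ ∧
      ((monoGraph χ c₁).induce A₁).Preconnected ∧
      (∀ x y : A₁, ((monoGraph χ c₁).induce A₁).dist x y ≤ 8) ∧
      ((monoGraph χ c₂).induce A₂).Preconnected ∧
      (∀ x y : A₂, ((monoGraph χ c₂).induce A₂).dist x y ≤ 8) := by
  rcases Nat.eq_zero_or_pos n with hn | hn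
  · subst hn
    refine ⟨0, 0, ∅, ∅, ?_, ?_, ?_, ?_, ?_⟩
    · exact Set.eq_univ_of_forall fun x => x.elim0
    · rintro ⟨x, hx⟩; exact absurd hx (Set.notMem_empty x)
    · rintro ⟨x, hx⟩; exact absurd hx (Set.notMem_empty x)
    · rintro ⟨x, hx⟩; exact absurd hx (Set.notMem_empty x)
    · rintro ⟨x, hx⟩; exact absurd hx (Set.notMem_empty x)
  · obtain ⟨c₁, c₂, u₁, u₂, hcov⟩ := Stmt1Aux.cover_main χ ⟨0, hn⟩
    obtain ⟨h1c, h1d⟩ := Stmt1Aux.ball_good χ c₁ u₁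
    obtain ⟨h2c, h2d⟩ := Stmt1Aux.ball_good χ c₂ u₂
    exact ⟨c₁, c₂, _, _, Set.eq_univ_of_forall fun x => (hcov x).elim Or.inl Or.inr,
      h1c, h1d, h2c, h2d⟩
end

section
/- For every l ≥ 1 and d ≥ 0 there is a constant N = N(l,d) such that the following holds: if S is a finite set of vertices of the graph G_l (vertex set ℕ^l, edges between tuples differing in every coordinate) such that the induced subgraph G_l[S] has maximum degree at most d, then the number of non-isolated vertices of G_l[S] is at most N. -/
/-- The graph `G_l` on `ℕ^l`: two tuples are adjacent iff they differ in every coordinate. -/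
def Gl (l : ℕ) : SimpleGraph (Fin l → ℕ) where
  Adj x y := x ≠ y ∧ ∀ i, x i ≠ y i
  symm := ⟨fun _ _ h => ⟨h.1.symm, fun i => (h.2 i).symm⟩⟩
  loopless := ⟨fun _ h => h.1 rfl⟩

open Finset

/-- Recursive bound for cross-free matchings with `n` active coordinates. -/
def Cb : ℕ → ℕ
  | 0 => 1
  | n + 1 => 1 + (n + 1) ^ 2 * Cb n

lemma one_le_Cb (n : ℕ) : 1 ≤ Cb n := by
  cases n <;> simp [Cb]

/-- Key combinatorial lemma: a "cross-free matching" (a family of pairs `(p k, q k)` with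
`p k` differing from `q k` in every active coordinate, but `p k` sharing an active
coordinate with `q k'` for `k ≠ k'`) has bounded size. -/
lemma crossfree_bound : ∀ (n : ℕ) {l : ℕ} (D : Finset (Fin l)), D.card ≤ n →
    ∀ {ι : Type} (s : Finset ι) (p q : ι → Fin l → ℕ),
    (∀ k ∈ s, ∀ i ∈ D, p k i ≠ q k i) →
    (∀ k ∈ s, ∀ k' ∈ s, k ≠ k' → ∃ i ∈ D, p k i = q k' i) →
    s.card ≤ Cb n := by
  intro n
  induction n with
  | zero =>
    intro l D hD ι s p q _H1 H2
    by_contra h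
    push_neg at h
    have h1 : 1 < s.card := by
      have : Cb 0 = 1 := rfl
      omega
    obtain ⟨a, ha, b, hb, hab⟩ := Finset.one_lt_card.mp h1
    obtain ⟨i, hi, _⟩ := H2 a ha b hb hab
    have hDe : D = ∅ := Finset.card_eq_zero.mp (Nat.le_zero.mp hD)
    simp [hDe] at hi
  | succ n ih =>
    intro l D hD ι s p q H1 H2
    classical
    by_cases hs : s.card ≤ 1
    · exact hs.trans (one_le_Cb (n + 1))
    push_neg at hs
    have hpos : 0 < s.card := by omega
    obtain ⟨k₀, hk₀⟩ := Finset.card_pos.mp hpos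
    obtain ⟨a0, ha0, b0, hb0, hab0⟩ := Finset.one_lt_card.mp hs
    obtain ⟨i0, _, _⟩ := H2 a0 ha0 b0 hb0 hab0
    haveI : Nonempty (Fin l) := ⟨i0⟩
    have hch : ∀ k : ι, ∃ ij : Fin l × Fin l, k ∈ s.erase k₀ →
        ij.1 ∈ D ∧ ij.2 ∈ D ∧ p k ij.1 = q k₀ ij.1 ∧ q k ij.2 = p k₀ ij.2 := by
      intro k
      by_cases hk : k ∈ s.erase k₀
      · have hkne : k ≠ k₀ := Finset.ne_of_mem_erase hk
        have hks : k ∈ s := Finset.mem_of_mem_erase hk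
        obtain ⟨i, hi, hpi⟩ := H2 k hks k₀ hk₀ hkne
        obtain ⟨j, hj, hqj⟩ := H2 k₀ hk₀ k hks hkne.symm
        exact ⟨(i, j), fun _ => ⟨hi, hj, hpi, hqj.symm⟩⟩
      · exact ⟨(Classical.arbitrary _, Classical.arbitrary _), fun h => absurd h hk⟩
    choose f hf using hch
    have hmaps : ∀ k ∈ s.erase k₀, f k ∈ D ×ˢ D := by
      intro k hk
      obtain ⟨h1, h2, _, _⟩ := hf k hk
      exact Finset.mem_product.mpr ⟨h1, h2⟩
    have hfiber : ∀ ij ∈ D ×ˢ D, ((s.erase k₀).filter (fun k => f k = ij)).card ≤ Cb n := by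
      intro ij hij
      obtain ⟨hi, hj⟩ := Finset.mem_product.mp hij
      have hD' : ((D.erase ij.1).erase ij.2).card ≤ n := by
        have h1 : (D.erase ij.1).card = D.card - 1 := Finset.card_erase_of_mem hi
        have h2 : ((D.erase ij.1).erase ij.2).card ≤ (D.erase ij.1).card := Finset.card_erase_le
        omega
      refine ih ((D.erase ij.1).erase ij.2) hD' _ p q ?_ ?_
      · intro k hk t ht
        exact H1 k (Finset.mem_of_mem_erase (Finset.mem_of_mem_filter k hk))
          t (Finset.mem_of_mem_erase (Finset.mem_of_mem_erase ht))
      · intro k hk k' hk' hne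
        have hkmem := Finset.mem_filter.mp hk
        have hk'mem := Finset.mem_filter.mp hk'
        have hks : k ∈ s := Finset.mem_of_mem_erase hkmem.1
        have hk's : k' ∈ s := Finset.mem_of_mem_erase hk'mem.1
        obtain ⟨t, htD, hteq⟩ := H2 k hks k' hk's hne
        obtain ⟨_, _, hpk, hqk⟩ := hf k hkmem.1
        obtain ⟨_, _, hpk', hqk'⟩ := hf k' hk'mem.1
        rw [hkmem.2] at hpk
        rw [hkmem.2] at hqk
        rw [hk'mem.2] at hpk'
        rw [hk'mem.2] at hqk'
        refine ⟨t, ?_, hteq⟩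
        rw [Finset.mem_erase, Finset.mem_erase]
        refine ⟨?_, ?_, htD⟩
        · -- t ≠ ij.2
          intro h
          apply H1 k hks t htD
          rw [h, hqk, ← hqk', ← h]
          exact hteq
        · -- t ≠ ij.1
          intro h
          apply H1 k' hk's t htD
          rw [h, hpk', ← hpk, ← h]
          exact hteq
    have hcard : (s.erase k₀).card ≤ Cb n * (D ×ˢ D).card :=
      Finset.card_le_mul_card_image_of_maps_to hmaps (Cb n) hfiber
    have hprod : (D ×ˢ D).card ≤ (n + 1) * (n + 1) := by
      rw [Finset.card_product]
      exact Nat.mul_le_mul hD hD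
    have herase : (s.erase k₀).card = s.card - 1 := Finset.card_erase_of_mem hk₀
    have hfin : Cb n * (D ×ˢ D).card ≤ Cb n * ((n + 1) * (n + 1)) :=
      Nat.mul_le_mul_left _ hprod
    have : s.card ≤ 1 + (n + 1) ^ 2 * Cb n := by
      have hsq : (n + 1) ^ 2 * Cb n = Cb n * ((n + 1) * (n + 1)) := by ring
      omega
    simpa [Cb] using this

lemma not_adj_share {l : ℕ} (hl : 1 ≤ l) {x y : Fin l → ℕ}
    (h : ¬ (Gl l).Adj x y) : ∃ i, x i = y i := by
  by_cases hxy : x = y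
  · exact ⟨⟨0, hl⟩, by rw [hxy]⟩
  · have h' : ¬(x ≠ y ∧ ∀ i, x i ≠ y i) := h
    push_neg at h'
    exact h' hxy

/-- For every `l ≥ 1` and `d` there is `N = N(l,d)` such that any finite `S ⊆ ℕ^l`
whose induced subgraph in `G_l` has maximum degree at most `d` has at most `N`
non-isolated vertices. -/
theorem stmt5 (l d : ℕ) (hl : 1 ≤ l) :
    ∃ N : ℕ, ∀ S : Set (Fin l → ℕ), S.Finite →
      (∀ v ∈ S, {u ∈ S | (Gl l).Adj v u}.ncard ≤ d) →
      {v ∈ S | ∃ u ∈ S, (Gl l).Adj v u}.ncard ≤ N := by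
  classical
  refine ⟨2 * Cb l * (d + d * d), ?_⟩
  intro S hS hdeg
  set F := hS.toFinset with hF
  have hdegF : ∀ v ∈ F, (F.filter (fun u => (Gl l).Adj v u)).card ≤ d := by
    intro v hv
    have hd := hdeg v (hS.mem_toFinset.mp hv)
    have e : {u ∈ S | (Gl l).Adj v u} = ↑(F.filter (fun u => (Gl l).Adj v u)) := by
      ext u
      simp [hF, Set.Finite.mem_toFinset]
    rwa [e, Set.ncard_coe_finset] at hd
  have eT : {v ∈ S | ∃ u ∈ S, (Gl l).Adj v u}
      = ↑(F.filter (fun v => ∃ u ∈ F, (Gl l).Adj v u)) := by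
    ext v
    simp [hF, Set.Finite.mem_toFinset]
  rw [eT, Set.ncard_coe_finset]
  set T := F.filter (fun v => ∃ u ∈ F, (Gl l).Adj v u) with hT
  -- maximum cross-free pair set
  set Pairs := (F ×ˢ F).filter (fun pr => (Gl l).Adj pr.1 pr.2) with hPairs
  set good := fun (P : Finset ((Fin l → ℕ) × (Fin l → ℕ))) =>
    ∀ pr ∈ P, ∀ pr' ∈ P, pr ≠ pr' → ¬ (Gl l).Adj pr.1 pr'.2 with hgood
  have hne : (Pairs.powerset.filter good).Nonempty := by
    refine ⟨∅, ?_⟩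
    simp [hgood]
  obtain ⟨P, hPmem, hPmax⟩ :=
    Finset.exists_max_image (Pairs.powerset.filter good) Finset.card hne
  have hPsub : P ⊆ Pairs := Finset.mem_powerset.mp (Finset.mem_filter.mp hPmem).1
  have hPgood : good P := (Finset.mem_filter.mp hPmem).2
  have hPadj : ∀ pr ∈ P, pr.1 ∈ F ∧ pr.2 ∈ F ∧ (Gl l).Adj pr.1 pr.2 := by
    intro pr hpr
    have := Finset.mem_filter.mp (hPsub hpr)
    have hmem := Finset.mem_product.mp this.1
    exact ⟨hmem.1, hmem.2, this.2⟩
  -- the cross-free bound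
  have hPcard : P.card ≤ Cb l := by
    have := crossfree_bound l (Finset.univ : Finset (Fin l)) (by simp) P
      (fun pr => pr.1) (fun pr => pr.2) ?_ ?_
    · exact this
    · intro k hk i _
      exact ((hPadj k hk).2.2).2 i
    · intro k hk k' hk' hne'
      obtain ⟨i, hi⟩ := not_adj_share hl (hPgood k hk k' hk' hne')
      exact ⟨i, Finset.mem_univ i, hi⟩
  -- endpoints
  set E := P.image Prod.fst ∪ P.image Prod.snd with hE
  have hEcard : E.card ≤ 2 * P.card := by
    calc E.card ≤ (P.image Prod.fst).card + (P.image Prod.snd).card :=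
          Finset.card_union_le _ _
    _ ≤ P.card + P.card := Nat.add_le_add (Finset.card_image_le) (Finset.card_image_le)
    _ = 2 * P.card := by ring
  have hEF : ∀ w ∈ E, w ∈ F := by
    intro w hw
    rcases Finset.mem_union.mp hw with h | h
    · obtain ⟨pr, hpr, rfl⟩ := Finset.mem_image.mp h
      exact (hPadj pr hpr).1
    · obtain ⟨pr, hpr, rfl⟩ := Finset.mem_image.mp h
      exact (hPadj pr hpr).2.1
  set A := F.filter (fun v => ∃ w ∈ E, (Gl l).Adj w v) with hA
  set B := F.filter (fun v => ∃ u ∈ A, (Gl l).Adj u v) with hB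
  -- every non-isolated vertex is in A ∪ B
  have hTsub : T ⊆ A ∪ B := by
    intro v hv
    have hmemv := Finset.mem_filter.mp hv
    have hvF := hmemv.1
    obtain ⟨u, huF, hadj⟩ := hmemv.2
    by_cases hvA : v ∈ A
    · exact Finset.mem_union_left _ hvA
    have huA : u ∈ A := by
      by_contra huA
      -- insert (v, u) into P; contradicts maximality
      have hvuP : (v, u) ∉ P := by
        intro hmem
        apply hvA
        refine Finset.mem_filter.mpr ⟨hvF, u, ?_, hadj.symm⟩
        exact Finset.mem_union_right _ (Finset.mem_image.mpr ⟨(v, u), hmem, rfl⟩)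
      have hvuPairs : (v, u) ∈ Pairs := by
        refine Finset.mem_filter.mpr ⟨Finset.mem_product.mpr ⟨hvF, huF⟩, hadj⟩
      have hgood' : good (insert (v, u) P) := by
        intro pr hpr pr' hpr' hne'
        rcases Finset.mem_insert.mp hpr with rfl | hprP
        · rcases Finset.mem_insert.mp hpr' with h' | hpr'P
          · exact absurd h'.symm hne'
          · intro hadj'
            apply hvA
            refine Finset.mem_filter.mpr ⟨hvF, pr'.2, ?_, hadj'.symm⟩
            exact Finset.mem_union_right _ (Finset.mem_image.mpr ⟨pr', hpr'P, rfl⟩)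
        · rcases Finset.mem_insert.mp hpr' with rfl | hpr'P
          · intro hadj'
            apply huA
            refine Finset.mem_filter.mpr ⟨huF, pr.1, ?_, hadj'⟩
            exact Finset.mem_union_left _ (Finset.mem_image.mpr ⟨pr, hprP, rfl⟩)
          · exact hPgood pr hprP pr' hpr'P hne'
      have hins : insert (v, u) P ∈ Pairs.powerset.filter good := by
        refine Finset.mem_filter.mpr ⟨Finset.mem_powerset.mpr ?_, hgood'⟩
        exact Finset.insert_subset hvuPairs hPsub
      have := hPmax _ hins
      rw [Finset.card_insert_of_notMem hvuP] at this
      omega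
    exact Finset.mem_union_right _
      (Finset.mem_filter.mpr ⟨hvF, u, huA, hadj.symm⟩)
  -- cardinality bounds
  have hAcard : A.card ≤ E.card * d := by
    have hsub : A ⊆ E.biUnion (fun w => F.filter (fun v => (Gl l).Adj w v)) := by
      intro v hv
      have hmemv := Finset.mem_filter.mp hv
      have hvF := hmemv.1
      obtain ⟨w, hwE, hadj⟩ := hmemv.2
      exact Finset.mem_biUnion.mpr ⟨w, hwE, Finset.mem_filter.mpr ⟨hvF, hadj⟩⟩
    calc A.card ≤ (E.biUnion (fun w => F.filter (fun v => (Gl l).Adj w v))).card :=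
          Finset.card_le_card hsub
    _ ≤ ∑ w ∈ E, (F.filter (fun v => (Gl l).Adj w v)).card := Finset.card_biUnion_le
    _ ≤ ∑ _w ∈ E, d := Finset.sum_le_sum (fun w hw => hdegF w (hEF w hw))
    _ = E.card * d := by rw [Finset.sum_const, smul_eq_mul]
  have hAF : ∀ u ∈ A, u ∈ F := fun u hu => (Finset.mem_filter.mp hu).1
  have hBcard : B.card ≤ A.card * d := by
    have hsub : B ⊆ A.biUnion (fun w => F.filter (fun v => (Gl l).Adj w v)) := by
      intro v hv
      have hmemv := Finset.mem_filter.mp hv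
      have hvF := hmemv.1
      obtain ⟨w, hwA, hadj⟩ := hmemv.2
      exact Finset.mem_biUnion.mpr ⟨w, hwA, Finset.mem_filter.mpr ⟨hvF, hadj⟩⟩
    calc B.card ≤ (A.biUnion (fun w => F.filter (fun v => (Gl l).Adj w v))).card :=
          Finset.card_le_card hsub
    _ ≤ ∑ w ∈ A, (F.filter (fun v => (Gl l).Adj w v)).card := Finset.card_biUnion_le
    _ ≤ ∑ _w ∈ A, d := Finset.sum_le_sum (fun w hw => hdegF w (hAF w hw))
    _ = A.card * d := by rw [Finset.sum_const, smul_eq_mul]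
  calc T.card ≤ (A ∪ B).card := Finset.card_le_card hTsub
  _ ≤ A.card + B.card := Finset.card_union_le _ _
  _ ≤ E.card * d + A.card * d := Nat.add_le_add hAcard hBcard
  _ ≤ 2 * P.card * d + (E.card * d) * d := by
      refine Nat.add_le_add (Nat.mul_le_mul_right _ hEcard) (Nat.mul_le_mul_right _ hAcard)
  _ ≤ 2 * P.card * d + (2 * P.card * d) * d := by
      refine Nat.add_le_add_left (Nat.mul_le_mul_right _ (Nat.mul_le_mul_right _ hEcard)) _
  _ ≤ 2 * Cb l * (d + d * d) := by nlinarith [hPcard]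
end

section
/- If S is a finite set of vertices of the graph G₃ such that the induced subgraph G₃[S] is a path (i.e., S can be enumerated s₁,...,s_r where the only edges among vertices of S are s_i s_{i+1} for 1 ≤ i ≤ r−1), then |S| ≤ 30. -/
/-- Final step: a set of ≥ 4 indices that agree in two coordinates `c`, `d`
yields a contradiction. -/
private lemma final3 (r : ℕ) (t : ℕ → Fin 3 → ℕ) (hr : 31 ≤ r)
    (hconsec : ∀ k, k + 1 < r → ∀ c, t k c ≠ t (k+1) c)
    (hshare : ∀ i j, i < r → j < r → i ≠ j → i + 1 ≠ j → j + 1 ≠ i → ∃ c, t i c = t j c)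
    (hdist : ∀ i j, i < r → j < r → i ≠ j → ∃ c, t i c ≠ t j c)
    (c d e : Fin 3) (hcover : ∀ x : Fin 3, x = c ∨ x = d ∨ x = e)
    (B : Finset ℕ) (hBsub : B ⊆ Finset.Ico 2 30) (hBcard : 4 ≤ B.card)
    (α β : ℕ) (hBc : ∀ j ∈ B, t j c = α) (hBd : ∀ j ∈ B, t j d = β) : False := by
  have hBne : B.Nonempty := Finset.card_pos.mp (by omega)
  set b := B.min' hBne with hbdef
  have hb : b ∈ B := B.min'_mem hBne
  have hbI : 2 ≤ b ∧ b < 30 := Finset.mem_Ico.mp (hBsub hb)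
  have hb1r : b + 1 < r := by omega
  have h1c : t (b+1) c ≠ α := fun h => hconsec b hb1r c ((hBc b hb).trans h.symm)
  have h1d : t (b+1) d ≠ β := fun h => hconsec b hb1r d ((hBd b hb).trans h.symm)
  set B' := B.filter (fun x => x ≠ b ∧ x ≠ b + 2) with hB'def
  have hBsplit : B ⊆ B' ∪ {b, b + 2} := by
    intro x hx
    by_cases h1 : x = b
    · exact Finset.mem_union_right _ (by simp [h1])
    by_cases h2 : x = b + 2
    · exact Finset.mem_union_right _ (by simp [h2])
    · exact Finset.mem_union_left _ (Finset.mem_filter.mpr ⟨hx, h1, h2⟩)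
  have hB'card : 2 ≤ B'.card := by
    have h1 := Finset.card_le_card hBsplit
    have h2 := Finset.card_union_le B' ({b, b + 2} : Finset ℕ)
    have h3 : ({b, b + 2} : Finset ℕ).card ≤ 2 := Finset.card_insert_le _ _ |>.trans (by simp)
    omega
  have hkey : ∀ x ∈ B', t x e = t (b+1) e := by
    intro x hx
    obtain ⟨hxB, hxb, hxb2⟩ := Finset.mem_filter.mp hx
    have hxI : 2 ≤ x ∧ x < 30 := Finset.mem_Ico.mp (hBsub hxB)
    have hxr : x < r := by omega
    have hxb1 : x ≠ b + 1 := fun h => h1c (h ▸ hBc x hxB)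
    obtain ⟨f, hf⟩ := hshare (b+1) x hb1r hxr (fun h => hxb1 h.symm)
      (by omega) (by omega)
    have hfc : f ≠ c := fun h => h1c ((h ▸ hf).trans (hBc x hxB))
    have hfd : f ≠ d := fun h => h1d ((h ▸ hf).trans (hBd x hxB))
    rcases hcover f with h | h | h
    · exact absurd h hfc
    · exact absurd h hfd
    · exact (h ▸ hf).symm
  obtain ⟨x, hx, y, hy, hxy⟩ := Finset.one_lt_card.mp (by omega : 1 < B'.card)
  have hxB := (Finset.mem_filter.mp hx).1
  have hyB := (Finset.mem_filter.mp hy).1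
  have hxr : x < r := by have := Finset.mem_Ico.mp (hBsub hxB); omega
  have hyr : y < r := by have := Finset.mem_Ico.mp (hBsub hyB); omega
  obtain ⟨g, hg⟩ := hdist x y hxr hyr hxy
  rcases hcover g with h | h | h
  · exact hg (h ▸ ((hBc x hxB).trans (hBc y hyB).symm))
  · exact hg (h ▸ ((hBd x hxB).trans (hBd y hyB).symm))
  · exact hg (h ▸ ((hkey x hx).trans (hkey y hy).symm))

private lemma key3 (r : ℕ) (t : ℕ → Fin 3 → ℕ) (hr : 31 ≤ r)
    (hconsec : ∀ k, k + 1 < r → ∀ c, t k c ≠ t (k+1) c)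
    (hshare : ∀ i j, i < r → j < r → i ≠ j → i + 1 ≠ j → j + 1 ≠ i → ∃ c, t i c = t j c)
    (hdist : ∀ i j, i < r → j < r → i ≠ j → ∃ c, t i c ≠ t j c) : False := by
  classical
  set F₀ : Finset ℕ := Finset.Ico 2 30 with hF₀def
  have hF₀card : F₀.card = 28 := by simp [hF₀def]
  set A : Fin 3 → Finset ℕ := fun c => F₀.filter (fun j => t j c = t 0 c) with hAdef
  have hcover0 : F₀ ⊆ A 0 ∪ A 1 ∪ A 2 := by
    intro j hj
    have hjI : 2 ≤ j ∧ j < 30 := Finset.mem_Ico.mp hj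
    obtain ⟨cc, hcc⟩ := hshare 0 j (by omega) (by omega) (by omega) (by omega) (by omega)
    have h3 : cc = 0 ∨ cc = 1 ∨ cc = 2 := by fin_cases cc <;> simp
    rcases h3 with h | h | h <;>
      simp only [Finset.mem_union, hAdef, Finset.mem_filter] <;>
        [exact Or.inl (Or.inl ⟨hj, h ▸ hcc.symm⟩);
         exact Or.inl (Or.inr ⟨hj, h ▸ hcc.symm⟩);
         exact Or.inr ⟨hj, h ▸ hcc.symm⟩]
  obtain ⟨c, hc⟩ : ∃ c : Fin 3, 10 ≤ (A c).card := by
    have h1 := Finset.card_le_card hcover0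
    have h2 := Finset.card_union_le (A 0 ∪ A 1) (A 2)
    have h3 := Finset.card_union_le (A 0) (A 1)
    have : 10 ≤ (A 0).card ∨ 10 ≤ (A 1).card ∨ 10 ≤ (A 2).card := by omega
    rcases this with h | h | h
    exacts [⟨0, h⟩, ⟨1, h⟩, ⟨2, h⟩]
  obtain ⟨d, e, hdc, hec, hde, hcov⟩ :
      ∃ d e : Fin 3, d ≠ c ∧ e ≠ c ∧ d ≠ e ∧ ∀ x : Fin 3, x = c ∨ x = d ∨ x = e := by
    have : ∀ c : Fin 3, ∃ d e : Fin 3,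
        d ≠ c ∧ e ≠ c ∧ d ≠ e ∧ ∀ x : Fin 3, x = c ∨ x = d ∨ x = e := by decide
    exact this c
  have hAsub : A c ⊆ F₀ := Finset.filter_subset _ _
  have hAval : ∀ j ∈ A c, t j c = t 0 c := fun j hj => (Finset.mem_filter.mp hj).2
  have hAne : (A c).Nonempty := Finset.card_pos.mp (by omega)
  set a := (A c).min' hAne with hadef
  have ha : a ∈ A c := (A c).min'_mem hAne
  have haI : 2 ≤ a ∧ a < 30 := Finset.mem_Ico.mp (hAsub ha)
  have ha1r : a + 1 < r := by omega
  have h1c : t (a+1) c ≠ t 0 c := fun h => hconsec a ha1r c ((hAval a ha).trans h.symm)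
  set A' := (A c).filter (fun x => x ≠ a ∧ x ≠ a + 2) with hA'def
  have hA'sub : A' ⊆ A c := Finset.filter_subset _ _
  have hAsplit : A c ⊆ A' ∪ {a, a + 2} := by
    intro x hx
    by_cases h1 : x = a
    · exact Finset.mem_union_right _ (by simp [h1])
    by_cases h2 : x = a + 2
    · exact Finset.mem_union_right _ (by simp [h2])
    · exact Finset.mem_union_left _ (Finset.mem_filter.mpr ⟨hx, h1, h2⟩)
  have hA'card : 8 ≤ A'.card := by
    have h1 := Finset.card_le_card hAsplit
    have h2 := Finset.card_union_le A' ({a, a + 2} : Finset ℕ)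
    have h3 : ({a, a + 2} : Finset ℕ).card ≤ 2 := Finset.card_insert_le _ _ |>.trans (by simp)
    omega
  have hkey : ∀ x ∈ A', t x d = t (a+1) d ∨ t x e = t (a+1) e := by
    intro x hx
    obtain ⟨hxA, hxa, hxa2⟩ := Finset.mem_filter.mp hx
    have hxI : 2 ≤ x ∧ x < 30 := Finset.mem_Ico.mp (hAsub hxA)
    have hxr : x < r := by omega
    have hxa1 : x ≠ a + 1 := fun h => h1c (h ▸ hAval x hxA)
    obtain ⟨f, hf⟩ := hshare (a+1) x ha1r hxr (fun h => hxa1 h.symm)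
      (by omega) (by omega)
    have hfc : f ≠ c := fun h => h1c ((h ▸ hf).trans (hAval x hxA))
    rcases hcov f with h | h | h
    · exact absurd h hfc
    · exact Or.inl (h ▸ hf).symm
    · exact Or.inr (h ▸ hf).symm
  set Bd := A'.filter (fun x => t x d = t (a+1) d) with hBddef
  set Be := A'.filter (fun x => t x e = t (a+1) e) with hBedef
  have hsplit2 : A' ⊆ Bd ∪ Be := by
    intro x hx
    rcases hkey x hx with h | h
    · exact Finset.mem_union_left _ (Finset.mem_filter.mpr ⟨hx, h⟩)
    · exact Finset.mem_union_right _ (Finset.mem_filter.mpr ⟨hx, h⟩)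
  have h4 : 4 ≤ Bd.card ∨ 4 ≤ Be.card := by
    have h1 := Finset.card_le_card hsplit2
    have h2 := Finset.card_union_le Bd Be
    omega
  rcases h4 with h | h
  · exact final3 r t hr hconsec hshare hdist c d e
      (fun x => by rcases hcov x with h | h | h <;> tauto)
      Bd (fun x hx => hAsub (hA'sub (Finset.filter_subset _ _ hx)))
      h (t 0 c) (t (a+1) d)
      (fun j hj => hAval j (hA'sub (Finset.filter_subset _ _ hj)))
      (fun j hj => (Finset.mem_filter.mp hj).2)
  · exact final3 r t hr hconsec hshare hdist c e d
      (fun x => by rcases hcov x with h | h | h <;> tauto)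
      Be (fun x hx => hAsub (hA'sub (Finset.filter_subset _ _ hx)))
      h (t 0 c) (t (a+1) e)
      (fun j hj => hAval j (hA'sub (Finset.filter_subset _ _ hj)))
      (fun j hj => (Finset.mem_filter.mp hj).2)

/-- If a finite set `S` of vertices of `G₃` can be enumerated `s₀, …, s_{r-1}` so that
the only adjacencies among vertices of `S` are between consecutive elements
(i.e. `G₃[S]` is a path), then `|S| ≤ 30`. -/
theorem stmt6 (S : Finset (Fin 3 → ℕ)) (r : ℕ) (s : Fin r → (Fin 3 → ℕ))
    (hinj : Function.Injective s)
    (hrange : ∀ x, x ∈ S ↔ ∃ i, s i = x)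
    (hpath : ∀ i j : Fin r,
      (Gl 3).Adj (s i) (s j) ↔ (i.val + 1 = j.val ∨ j.val + 1 = i.val)) :
    S.card ≤ 30 := by
  classical
  have hSr : S.card ≤ r := by
    have hsub : S ⊆ Finset.univ.image s := by
      intro x hx
      obtain ⟨i, hi⟩ := (hrange x).mp hx
      exact Finset.mem_image.mpr ⟨i, Finset.mem_univ i, hi⟩
    calc S.card ≤ (Finset.univ.image s).card := Finset.card_le_card hsub
      _ ≤ (Finset.univ : Finset (Fin r)).card := Finset.card_image_le
      _ = r := by simp
  by_cases hr : r ≤ 30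
  · omega
  · exfalso
    have hr31 : 31 ≤ r := by omega
    set t : ℕ → Fin 3 → ℕ := fun k => if h : k < r then s ⟨k, h⟩ else fun _ => 0 with htdef
    have ht : ∀ k (h : k < r), t k = s ⟨k, h⟩ := fun k h => dif_pos h
    have hne : ∀ (i j : ℕ) (hi : i < r) (hj : j < r), i ≠ j → s ⟨i, hi⟩ ≠ s ⟨j, hj⟩ := by
      intro i j hi hj hij h
      exact hij (by simpa using congrArg Fin.val (hinj h))
    apply key3 r t hr31
    · intro k hk c
      rw [ht k (by omega), ht (k+1) hk]
      have hadj : (Gl 3).Adj (s ⟨k, by omega⟩) (s ⟨k+1, hk⟩) :=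
        (hpath _ _).mpr (Or.inl rfl)
      exact hadj.2 c
    · intro i j hi hj hij hij1 hij2
      rw [ht i hi, ht j hj]
      have hnadj : ¬ (Gl 3).Adj (s ⟨i, hi⟩) (s ⟨j, hj⟩) := by
        rw [hpath]
        simp only [not_or]
        exact ⟨hij1, hij2⟩
      have hne' := hne i j hi hj hij
      by_contra hall
      push_neg at hall
      exact hnadj ⟨hne', hall⟩
    · intro i j hi hj hij
      rw [ht i hi, ht j hj]
      exact Function.ne_iff.mp (hne i j hi hj hij)
end

section
/- Let S be a set of points in ℕ³ such that every three points of S are coplanar (i.e., for every three points there is a coordinate in which all three agree). Then S is contained in a plane, i.e., there exist a coordinate i and a value a such that every x ∈ S has x_i = a. (Here we may assume |S| ≥ 2 or handle small sets trivially.) -/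
/-- If every three points of `S ⊆ ℕ³` are coplanar (agree in some coordinate),
then `S` lies in a single plane `{x : x i = a}`. -/
theorem stmt8 (S : Set (Fin 3 → ℕ))
    (hcop : ∀ x ∈ S, ∀ y ∈ S, ∀ z ∈ S, ∃ i : Fin 3, x i = y i ∧ y i = z i) :
    ∃ (i : Fin 3) (a : ℕ), ∀ x ∈ S, x i = a := by
  rcases S.eq_empty_or_nonempty with hS | ⟨p, hp⟩
  · exact ⟨0, 0, fun x hx => by simp [hS] at hx⟩
  by_contra h
  push_neg at h
  obtain ⟨q0, hq0, h0⟩ := h 0 (p 0)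
  obtain ⟨q1, hq1, h1⟩ := h 1 (p 1)
  obtain ⟨q2, hq2, h2⟩ := h 2 (p 2)
  obtain ⟨i, hA1, hA2⟩ := hcop p hp q0 hq0 q1 hq1
  obtain ⟨j, hB1, hB2⟩ := hcop p hp q0 hq0 q2 hq2
  obtain ⟨k, hC1, hC2⟩ := hcop p hp q1 hq1 q2 hq2
  obtain ⟨l, hD1, hD2⟩ := hcop q0 hq0 q1 hq1 q2 hq2
  fin_cases i <;> fin_cases j <;> fin_cases k <;> fin_cases l <;>
    simp only [Fin.mk_zero, Fin.mk_one, Fin.reduceFinMk] at hA1 hA2 hB1 hB2 hC1 hC2 hD1 hD2 <;>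
    omega
end

section
/- Let I be an independent set of size 4 in the graph G₃ (on ℕ³, with edges between triples differing in all coordinates). Then at least one of the following holds: (S1) I is contained in a plane {x : x_i = a}; or (S2) I = {(a,b,c), (a',b',c), (a',b,c'), (a,b',c')} for some a ≠ a', b ≠ b', c ≠ c'; or (S3) up to a permutation of the three coordinates, I = {(a,b,c), (a,b,c'), (a,b',t), (a',b,t)} for some a ≠ a', b ≠ b', c ≠ c' and some value t. -/
private def PS1 (T : Set (Fin 3 → ℕ)) : Prop := ∃ (i : Fin 3) (a : ℕ), ∀ x ∈ T, x i = a

private def PS2 (T : Set (Fin 3 → ℕ)) : Prop :=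
  ∃ a a' b b' c c' : ℕ, a ≠ a' ∧ b ≠ b' ∧ c ≠ c' ∧
    T = {![a, b, c], ![a', b', c], ![a', b, c'], ![a, b', c']}

private def PS3 (T : Set (Fin 3 → ℕ)) : Prop :=
  ∃ (σ : Equiv.Perm (Fin 3)) (a a' b b' c c' t : ℕ), a ≠ a' ∧ b ≠ b' ∧ c ≠ c' ∧
    T = (fun v => v ∘ σ) '' {![a, b, c], ![a, b, c'], ![a, b', t], ![a', b, t]}

private lemma mem3 (i j k m : Fin 3) (hij : i ≠ j) (hik : i ≠ k) (hjk : j ≠ k) :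
    m = i ∨ m = j ∨ m = k := by
  revert i j k m; decide

private lemma two3 (i a b c : Fin 3) (ha : a ≠ i) (hb : b ≠ i) (hab : a ≠ b) (hc : c ≠ i) :
    c = a ∨ c = b := by
  revert i a b c; decide

private lemma eq_of_agree3 {P Q : Fin 3 → ℕ} (i j k : Fin 3) (hij : i ≠ j) (hik : i ≠ k)
    (hjk : j ≠ k) (h1 : P i = Q i) (h2 : P j = Q j) (h3 : P k = Q k) : P = Q := by
  funext m
  rcases mem3 i j k m hij hik hjk with rfl | rfl | rfl <;> assumption

private lemma mkS1 {T : Set (Fin 3 → ℕ)} {P Q R S : Fin 3 → ℕ} (hT : T = {P, Q, R, S})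
    (i : Fin 3) (h1 : Q i = P i) (h2 : R i = P i) (h3 : S i = P i) : PS1 T := by
  refine ⟨i, P i, ?_⟩
  rw [hT]
  intro x hx
  simp only [Set.mem_insert_iff, Set.mem_singleton_iff] at hx
  rcases hx with rfl | rfl | rfl | rfl
  · rfl
  · exact h1
  · exact h2
  · exact h3

private lemma core3 {T : Set (Fin 3 → ℕ)} {P Q R S : Fin 3 → ℕ} (hT : T = {P, Q, R, S})
    (i j k : Fin 3) (hij : i ≠ j) (hik : i ≠ k) (hjk : j ≠ k)
    (hPQ : P ≠ Q)
    (h1 : P i = Q i) (h2 : P i = R i) (h3 : S j = P j) (h4 : S j = Q j) (h5 : S k = R k) :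
    PS1 T ∨ PS3 T := by
  by_cases hSi : S i = P i
  · exact Or.inl (mkS1 hT i h1.symm h2.symm hSi)
  by_cases hRj : R j = P j
  · exact Or.inl (mkS1 hT j (h4.symm.trans h3) hRj h3)
  have hPQj : P j = Q j := h3.symm.trans h4
  have hcc : P k ≠ Q k := fun hc => hPQ (eq_of_agree3 i j k hij hik hjk h1 hPQj hc)
  have hinj : Function.Injective ![i, j, k] := by
    intro a b hab
    fin_cases a <;> fin_cases b <;> simp_all
  have hbij := Finite.injective_iff_bijective.mp hinj
  set σ := Equiv.ofBijective _ hbij with hσ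
  have hτi : σ.symm i = 0 := σ.symm_apply_eq.mpr (by simp [σ, Equiv.ofBijective])
  have hτj : σ.symm j = 1 := σ.symm_apply_eq.mpr (by simp [σ, Equiv.ofBijective])
  have hτk : σ.symm k = 2 := σ.symm_apply_eq.mpr (by simp [σ, Equiv.ofBijective])
  have eP : P = ![P i, P j, P k] ∘ ⇑σ.symm := by
    funext m
    rcases mem3 i j k m hij hik hjk with rfl | rfl | rfl <;>
      simp [Function.comp_apply, hτi, hτj, hτk]
  have eQ : Q = ![P i, P j, Q k] ∘ ⇑σ.symm := by
    funext m
    rcases mem3 i j k m hij hik hjk with rfl | rfl | rfl <;>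
      simp [Function.comp_apply, hτi, hτj, hτk, h1.symm, hPQj.symm]
  have eR : R = ![P i, R j, R k] ∘ ⇑σ.symm := by
    funext m
    rcases mem3 i j k m hij hik hjk with rfl | rfl | rfl <;>
      simp [Function.comp_apply, hτi, hτj, hτk, h2.symm]
  have eS : S = ![S i, P j, R k] ∘ ⇑σ.symm := by
    funext m
    rcases mem3 i j k m hij hik hjk with rfl | rfl | rfl <;>
      simp [Function.comp_apply, hτi, hτj, hτk, h3, h5]
  refine Or.inr ⟨σ.symm, P i, S i, P j, R j, P k, Q k, R k,
    fun h => hSi h.symm, fun h => hRj h.symm, hcc, ?_⟩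
  rw [hT]
  simp only [Set.image_insert_eq, Set.image_singleton]
  rw [← eP, ← eQ, ← eR, ← eS]

private lemma mat0 {T : Set (Fin 3 → ℕ)} {W X Y Z : Fin 3 → ℕ} (hT : T = {W, X, Y, Z})
    (h0 : W 0 = X 0) (h0' : Y 0 = Z 0) (h1 : W 1 = Y 1) (h1' : X 1 = Z 1)
    (h2 : W 2 = Z 2) (h2' : X 2 = Y 2) : PS1 T ∨ PS2 T := by
  by_cases ha : W 0 = Y 0
  · exact Or.inl (mkS1 hT 0 h0.symm ha.symm (h0'.symm.trans ha.symm))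
  by_cases hb : W 1 = X 1
  · exact Or.inl (mkS1 hT 1 hb.symm h1.symm (h1'.symm.trans hb.symm))
  by_cases hc : W 2 = X 2
  · exact Or.inl (mkS1 hT 2 hc.symm (h2'.symm.trans hc.symm) h2.symm)
  have eW : W = ![W 0, W 1, W 2] := by funext m; fin_cases m <;> simp
  have eZ : Z = ![Z 0, Z 1, W 2] := by funext m; fin_cases m <;> simp [h2.symm]
  have eY : Y = ![Z 0, W 1, Y 2] := by funext m; fin_cases m <;> simp [h0', h1.symm]
  have eX : X = ![W 0, Z 1, Y 2] := by funext m; fin_cases m <;> simp [h0.symm, h1', h2']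
  refine Or.inr ⟨W 0, Z 0, W 1, Z 1, W 2, Y 2,
    fun h => ha (h.trans h0'.symm), fun h => hb (h.trans h1'.symm),
    fun h => hc (h.trans h2'.symm), ?_⟩
  rw [hT, eW, eX, eY, eZ]
  ext x
  simp only [Set.mem_insert_iff, Set.mem_singleton_iff]
  constructor <;> rintro (rfl|rfl|rfl|rfl) <;> simp

private lemma setswap {P Q R S : Fin 3 → ℕ} {T : Set (Fin 3 → ℕ)} (hT : T = {P, Q, R, S}) :
    T = {P, R, Q, S} := by
  rw [hT]; ext x; simp only [Set.mem_insert_iff, Set.mem_singleton_iff]; constructor <;> rintro (rfl|rfl|rfl|rfl) <;> simp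

private lemma tri {T : Set (Fin 3 → ℕ)} {P Q R S : Fin 3 → ℕ} (hT : T = {P, Q, R, S})
    (hPQ : P ≠ Q) (hPR : P ≠ R) (hQR : Q ≠ R)
    (i : Fin 3) (h1 : P i = Q i) (h2 : P i = R i)
    (hSP : ∃ m, S m = P m) (hSQ : ∃ m, S m = Q m) (hSR : ∃ m, S m = R m) :
    PS1 T ∨ PS3 T := by
  obtain ⟨m1, e1⟩ := hSP
  obtain ⟨m2, e2⟩ := hSQ
  obtain ⟨m3, e3⟩ := hSR
  by_cases hm1 : m1 = i
  · subst hm1; exact Or.inl (mkS1 hT m1 h1.symm h2.symm e1)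
  by_cases hm2 : m2 = i
  · subst hm2; exact Or.inl (mkS1 hT m2 h1.symm h2.symm (e2.trans h1.symm))
  by_cases hm3 : m3 = i
  · subst hm3; exact Or.inl (mkS1 hT m3 h1.symm h2.symm (e3.trans h2.symm))
  by_cases h12 : m1 = m2
  · subst h12
    by_cases h13 : m3 = m1
    · subst h13
      exact Or.inl (mkS1 hT m3 (e2.symm.trans e1) (e3.symm.trans e1) e1)
    · exact core3 hT i m1 m3 (Ne.symm hm1) (Ne.symm hm3) (fun h => h13 h.symm)
        hPQ h1 h2 e1 e2 e3
  · rcases two3 i m1 m2 m3 hm1 hm2 h12 hm3 with rfl | rfl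
    · exact core3 (setswap hT) i m3 m2 (Ne.symm hm3) (Ne.symm hm2)
        (fun h => h12 h) hPR h2 h1 e1 e3 e2
    · -- m3 = m2 : use (Q, R, P, S)
      have hT' : T = {Q, R, P, S} := by
        rw [hT]; ext x; simp only [Set.mem_insert_iff, Set.mem_singleton_iff]; constructor <;> rintro (rfl|rfl|rfl|rfl) <;> simp
      exact core3 hT' i m3 m1 (Ne.symm hm3) (Ne.symm hm1) (Ne.symm h12)
        hQR (h1.symm.trans h2) h1.symm e2 e3 e1

private lemma matdisp {T : Set (Fin 3 → ℕ)} {p q r s : Fin 3 → ℕ} (hT : T = {p, q, r, s})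
    (o n m : Fin 3) (hno : n ≠ o) (hmo : m ≠ o) (hmn : m ≠ n)
    (hi : p o = q o) (ho : s o = r o) (hj : p n = r n) (hn : s n = q n)
    (hm : s m = p m) (hk : q m = r m) : PS1 T ∨ PS2 T := by
  have hI3 : ∀ x : Fin 3, x = 0 ∨ x = 1 ∨ x = 2 := by decide
  rcases hI3 o with rfl | rfl | rfl
  · rcases hI3 n with rfl | rfl | rfl
    · exact absurd rfl hno
    · rcases hI3 m with rfl | rfl | rfl
      · exact absurd rfl hmo
      · exact absurd rfl hmn
      · exact mat0 hT hi ho.symm hj hn.symm hm.symm hk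
    · rcases hI3 m with rfl | rfl | rfl
      · exact absurd rfl hmo
      · have hT' : T = {p, q, s, r} := by
          rw [hT]; ext x; simp only [Set.mem_insert_iff, Set.mem_singleton_iff]; constructor <;> rintro (rfl|rfl|rfl|rfl) <;> simp
        exact mat0 hT' hi ho hm.symm hk hj hn.symm
      · exact absurd rfl hmn
  · rcases hI3 n with rfl | rfl | rfl
    · rcases hI3 m with rfl | rfl | rfl
      · exact absurd rfl hmn
      · exact absurd rfl hmo
      · have hT' : T = {p, r, q, s} := by
          rw [hT]; ext x; simp only [Set.mem_insert_iff, Set.mem_singleton_iff]; constructor <;> rintro (rfl|rfl|rfl|rfl) <;> simp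
        exact mat0 hT' hj hn.symm hi ho.symm hm.symm hk.symm
    · exact absurd rfl hno
    · rcases hI3 m with rfl | rfl | rfl
      · have hT' : T = {p, s, q, r} := by
          rw [hT]; ext x; simp only [Set.mem_insert_iff, Set.mem_singleton_iff]; constructor <;> rintro (rfl|rfl|rfl|rfl) <;> simp
        exact mat0 hT' hm.symm hk hi ho hj hn
      · exact absurd rfl hmo
      · exact absurd rfl hmn
  · rcases hI3 n with rfl | rfl | rfl
    · rcases hI3 m with rfl | rfl | rfl
      · exact absurd rfl hmn
      · have hT' : T = {p, r, s, q} := by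
          rw [hT]; ext x; simp only [Set.mem_insert_iff, Set.mem_singleton_iff]; constructor <;> rintro (rfl|rfl|rfl|rfl) <;> simp
        exact mat0 hT' hj hn hm.symm hk.symm hi ho.symm
      · exact absurd rfl hmo
    · rcases hI3 m with rfl | rfl | rfl
      · have hT' : T = {p, s, r, q} := by
          rw [hT]; ext x; simp only [Set.mem_insert_iff, Set.mem_singleton_iff]; constructor <;> rintro (rfl|rfl|rfl|rfl) <;> simp
        exact mat0 hT' hm.symm hk.symm hj hn hi ho
      · exact absurd rfl hmn
      · exact absurd rfl hmo
    · exact absurd rfl hno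

set_option maxHeartbeats 2000000 in


/-- Structure of independent sets of size 4 in `G₃` (the graph on `ℕ³` where two triples
are adjacent iff they differ in all three coordinates; being independent means any two
points agree in some coordinate).  Either the set is coplanar (S1), or it has the shape
S2 or (up to a coordinate permutation) S3. -/
theorem stmt9 (I : Finset (Fin 3 → ℕ)) (hcard : I.card = 4)
    (hind : ∀ x ∈ I, ∀ y ∈ I, ∃ i : Fin 3, x i = y i) :
    -- (S1) coplanar
    (∃ (i : Fin 3) (a : ℕ), ∀ x ∈ I, x i = a) ∨
    -- (S2)
    (∃ a a' b b' c c' : ℕ, a ≠ a' ∧ b ≠ b' ∧ c ≠ c' ∧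
      (↑I : Set (Fin 3 → ℕ)) =
        {![a, b, c], ![a', b', c], ![a', b, c'], ![a, b', c']}) ∨
    -- (S3), up to a permutation of the coordinates
    (∃ (σ : Equiv.Perm (Fin 3)) (a a' b b' c c' t : ℕ), a ≠ a' ∧ b ≠ b' ∧ c ≠ c' ∧
      (↑I : Set (Fin 3 → ℕ)) =
        (fun v => v ∘ σ) '' {![a, b, c], ![a, b, c'], ![a, b', t], ![a', b, t]}) := by
  suffices h : PS1 ↑I ∨ PS2 ↑I ∨ PS3 ↑I by
    rcases h with ⟨i, a, h1⟩ | h | h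
    · exact Or.inl ⟨i, a, fun x hx => h1 x (by simpa using hx)⟩
    · exact Or.inr (Or.inl h)
    · exact Or.inr (Or.inr h)
  have J13 : PS1 ↑I ∨ PS3 ↑I → PS1 ↑I ∨ PS2 ↑I ∨ PS3 ↑I :=
    fun h => h.elim Or.inl (fun h3 => Or.inr (Or.inr h3))
  have J12 : PS1 ↑I ∨ PS2 ↑I → PS1 ↑I ∨ PS2 ↑I ∨ PS3 ↑I :=
    fun h => h.elim Or.inl (fun h2 => Or.inr (Or.inl h2))
  -- extract the four points
  have hc4 : I.card = 3 + 1 := by omega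
  obtain ⟨p, t, hpt, hins, ht3⟩ := Finset.card_eq_succ.mp hc4
  obtain ⟨q, r, s, hqr, hqs, hrs, hteq⟩ := Finset.card_eq_three.mp ht3
  subst hteq
  simp only [Finset.mem_insert, Finset.mem_singleton, not_or] at hpt
  obtain ⟨hpq, hpr, hps⟩ := hpt
  have hIset : (↑I : Set (Fin 3 → ℕ)) = {p, q, r, s} := by
    rw [← hins]; simp only [Finset.coe_insert, Finset.coe_singleton]
  have hp : p ∈ I := by rw [← hins]; simp
  have hq : q ∈ I := by rw [← hins]; simp
  have hr : r ∈ I := by rw [← hins]; simp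
  have hs : s ∈ I := by rw [← hins]; simp
  obtain ⟨i, hi⟩ := hind p hp q hq
  obtain ⟨j, hj⟩ := hind p hp r hr
  obtain ⟨k, hk⟩ := hind q hq r hr
  have hsp := hind s hs p hp
  have hsq := hind s hs q hq
  have hsr := hind s hs r hr
  by_cases hji : j = i
  · subst hji
    exact J13 (tri hIset hpq hpr hqr j hi hj hsp hsq hsr)
  by_cases hki : k = i
  · subst hki
    have hT : (↑I : Set (Fin 3 → ℕ)) = {q, p, r, s} := by
      rw [hIset]; ext x; simp only [Set.mem_insert_iff, Set.mem_singleton_iff]; constructor <;> rintro (rfl|rfl|rfl|rfl) <;> simp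
    exact J13 (tri hT (Ne.symm hpq) hqr hpr k hi.symm hk hsq hsp hsr)
  by_cases hkj : k = j
  · subst hkj
    have hT : (↑I : Set (Fin 3 → ℕ)) = {r, p, q, s} := by
      rw [hIset]; ext x; simp only [Set.mem_insert_iff, Set.mem_singleton_iff]; constructor <;> rintro (rfl|rfl|rfl|rfl) <;> simp
    exact J13 (tri hT (Ne.symm hpr) (Ne.symm hqr) hpq k hj.symm hk.symm hsr hsp hsq)
  obtain ⟨m, hm⟩ := hsp
  by_cases hmi : m = i
  · subst hmi
    have hT : (↑I : Set (Fin 3 → ℕ)) = {p, q, s, r} := by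
      rw [hIset]; ext x; simp only [Set.mem_insert_iff, Set.mem_singleton_iff]; constructor <;> rintro (rfl|rfl|rfl|rfl) <;> simp
    exact J13 (tri hT hpq hps hqs m hi hm.symm ⟨j, hj.symm⟩ ⟨k, hk.symm⟩ (hind r hr s hs))
  by_cases hmj : m = j
  · subst hmj
    have hT : (↑I : Set (Fin 3 → ℕ)) = {p, r, s, q} := by
      rw [hIset]; ext x; simp only [Set.mem_insert_iff, Set.mem_singleton_iff]; constructor <;> rintro (rfl|rfl|rfl|rfl) <;> simp
    exact J13 (tri hT hpr hps hrs m hj hm.symm ⟨i, hi.symm⟩ ⟨k, hk⟩ (hind q hq s hs))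
  have hmk : m = k := by
    rcases mem3 i j k m (fun h => hji h.symm) (fun h => hki h.symm) (fun h => hkj h.symm)
      with rfl | rfl | rfl
    · exact absurd rfl hmi
    · exact absurd rfl hmj
    · rfl
  subst hmk
  obtain ⟨n, hn⟩ := hsq
  by_cases hni : n = i
  · subst hni
    have hT : (↑I : Set (Fin 3 → ℕ)) = {q, p, s, r} := by
      rw [hIset]; ext x; simp only [Set.mem_insert_iff, Set.mem_singleton_iff]; constructor <;> rintro (rfl|rfl|rfl|rfl) <;> simp
    exact J13 (tri hT (Ne.symm hpq) hqs hps n hi.symm hn.symm ⟨m, hk.symm⟩ ⟨j, hj.symm⟩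
      (hind r hr s hs))
  by_cases hnk : n = m
  · subst hnk
    have hT : (↑I : Set (Fin 3 → ℕ)) = {q, r, s, p} := by
      rw [hIset]; ext x; simp only [Set.mem_insert_iff, Set.mem_singleton_iff]; constructor <;> rintro (rfl|rfl|rfl|rfl) <;> simp
    exact J13 (tri hT hqr hqs hrs n hk hn.symm ⟨i, hi⟩ ⟨j, hj⟩ ⟨n, hm.symm⟩)
  have hnj : n = j := by
    rcases mem3 i j m n (fun h => hji h.symm) (fun h => hki h.symm) (fun h => hkj h.symm)
      with rfl | rfl | rfl
    · exact absurd rfl hni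
    · rfl
    · exact absurd rfl hnk
  subst hnj
  obtain ⟨o, ho⟩ := hsr
  by_cases hoj : o = n
  · subst hoj
    have hT : (↑I : Set (Fin 3 → ℕ)) = {r, p, s, q} := by
      rw [hIset]; ext x; simp only [Set.mem_insert_iff, Set.mem_singleton_iff]; constructor <;> rintro (rfl|rfl|rfl|rfl) <;> simp
    exact J13 (tri hT (Ne.symm hpr) hrs hps o hj.symm ho.symm ⟨m, hk⟩ ⟨i, hi.symm⟩
      ⟨o, hn.symm⟩)
  by_cases hok : o = m
  · subst hok
    have hT : (↑I : Set (Fin 3 → ℕ)) = {r, q, s, p} := by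
      rw [hIset]; ext x; simp only [Set.mem_insert_iff, Set.mem_singleton_iff]; constructor <;> rintro (rfl|rfl|rfl|rfl) <;> simp
    exact J13 (tri hT (Ne.symm hqr) hrs hqs o hk.symm ho.symm ⟨n, hj⟩ ⟨i, hi⟩ ⟨o, hm.symm⟩)
  have hoi : o = i := by
    rcases mem3 i n m o (fun h => hji h.symm) (fun h => hki h.symm) (fun h => hkj h.symm)
      with rfl | rfl | rfl
    · rfl
    · exact absurd rfl hoj
    · exact absurd rfl hok
  subst hoi
  -- matching case: coords o (p,q | r,s), n (p,r | q,s), m (p,s | q,r)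
  exact J12 (matdisp hIset o n m (fun h => hji h) (fun h => hki h) (fun h => hkj h)
    hi ho hj hn hm hk)
end

section
/- Let I be an independent set of size 5 in the graph G₃. Then either I is contained in a plane {x : x_i = a}, or I is contained in the union of three lines all passing through a common point p, namely lines of the form {x : x_j = p_j, x_k = p_k} through p for the three pairs {j,k} of coordinates. -/
abbrev F5 := Fin 5 → Fin 5

def rep (g : Fin 5 → Fin 3 → ℕ) (i : Fin 3) (k : Fin 5) : Fin 5 :=
  if g 0 i = g k i then 0 else if g 1 i = g k i then 1 else
  if g 2 i = g k i then 2 else if g 3 i = g k i then 3 else k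

theorem fin5_cases (x : Fin 5) : x = 0 ∨ x = 1 ∨ x = 2 ∨ x = 3 ∨ x = 4 := by
  revert x; decide

theorem rep_val (g : Fin 5 → Fin 3 → ℕ) (i : Fin 3) (k : Fin 5) :
    g (rep g i k) i = g k i := by
  unfold rep; split_ifs <;> first | assumption | rfl

set_option maxHeartbeats 2000000 in
theorem rep_mono (g : Fin 5 → Fin 3 → ℕ) (i : Fin 3) (a b : Fin 5) :
    g a i = g b i → rep g i a = rep g i b := by
  intro h
  rcases fin5_cases a with rfl|rfl|rfl|rfl|rfl <;>
    rcases fin5_cases b with rfl|rfl|rfl|rfl|rfl <;>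
    simp only [rep] <;> split_ifs <;> first | rfl | (exfalso; omega)

theorem rep_faithful (g : Fin 5 → Fin 3 → ℕ) (i : Fin 3) (a b : Fin 5)
    (h : rep g i a = rep g i b) : g a i = g b i := by
  have h1 := rep_val g i a
  have h2 := rep_val g i b
  rw [← h1, h, h2]

set_option maxHeartbeats 1000000 in
theorem rep_canon (g : Fin 5 → Fin 3 → ℕ) (i : Fin 3) (k : Fin 5) :
    rep g i (rep g i k) = rep g i k ∧ rep g i k ≤ k := by
  refine ⟨rep_mono g i _ _ (rep_val g i k), ?_⟩
  rcases fin5_cases k with rfl|rfl|rfl|rfl|rfl <;>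
    simp only [rep] <;> split_ifs <;> first | decide | (exfalso; omega)


def capp (n k : Nat) : Nat := (n >>> (3*k)) &&& 7

def enc (f : F5) : Nat :=
  (f 0).val + 8*((f 1).val + 8*((f 2).val + 8*((f 3).val + 8*(f 4).val)))

def pa : Fin 10 → Fin 5 := ![0,0,0,0,1,1,1,2,2,3]
def pb : Fin 10 → Fin 5 := ![1,2,3,4,2,3,4,3,4,4]

def pm (n : Nat) : Nat := (List.finRange 10).foldr
  (fun t acc => (if capp n (pa t).val == capp n (pb t).val then 2^t.val else 0) + acc) 0

def canonData : List (Nat × Nat) := [(0, 1023), (16384, 183), (1536, 347), (13824, 531), (17920, 19), (128, 621), (8320, 293), (16512, 37), (1152, 201), (9344, 897), (17536, 129), (1664, 73), (9856, 257), (13952, 513), (18048, 1), (8, 910), (4104, 198), (16392, 134), (520, 298), (4616, 610), (16904, 34), (1544, 266), (5640, 66), (13832, 514), (17928, 2), (72, 540), (4168, 340), (16456, 20), (584, 184), (4680, 1008), (16968, 176), (1608, 24), (5704, 336), (13896, 528), (17992, 16), (136, 524), (4232, 68), (8328, 260), (16520, 4), (648, 40), (4744, 608), (8840, 288), (17032,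 32), (1160, 136), (5256, 192), (9352, 896), (17544, 128), (1672, 8), (5768, 64), (9864, 256), (13960, 512), (18056, 0)]

theorem eta5 (f : F5) : ![f 0, f 1, f 2, f 3, f 4] = f := by
  funext k
  rcases (by revert k; decide : k = 0 ∨ k = 1 ∨ k = 2 ∨ k = 3 ∨ k = 4) with rfl|rfl|rfl|rfl|rfl <;> rfl

set_option maxHeartbeats 2000000 in
theorem capp_enc5 : ∀ (a b c d e : Fin 5) (k : Fin 5),
    capp (enc ![a,b,c,d,e]) k.val = ((![a,b,c,d,e] : F5) k).val := by decide

theorem capp_enc (f : F5) (k : Fin 5) : capp (enc f) k.val = (f k).val := by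
  have := capp_enc5 (f 0) (f 1) (f 2) (f 3) (f 4) k
  rwa [eta5] at this

set_option maxHeartbeats 8000000 in
theorem enc_mem5 : ∀ a b c d e : Fin 5,
    (∀ k, (![a,b,c,d,e] : F5) ((![a,b,c,d,e] : F5) k) = (![a,b,c,d,e] : F5) k ∧ (![a,b,c,d,e] : F5) k ≤ k) →
    (enc ![a,b,c,d,e], pm (enc ![a,b,c,d,e])) ∈ canonData := by decide

theorem enc_mem (f : F5) (h : ∀ k, f (f k) = f k ∧ f k ≤ k) :
    (enc f, pm (enc f)) ∈ canonData := by
  have := enc_mem5 (f 0) (f 1) (f 2) (f 3) (f 4)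
  rw [eta5] at this
  exact this h

set_option maxHeartbeats 1000000 in
theorem pm_bound : ∀ p ∈ canonData, p.2 < 1024 := by decide

set_option maxHeartbeats 1000000 in
theorem pm_bit : ∀ p ∈ canonData, ∀ t : Fin 10,
    (Nat.testBit p.2 t.val) = (capp p.1 (pa t).val == capp p.1 (pb t).val) := by decide

theorem pa_ne_pb : ∀ t : Fin 10, pa t ≠ pb t := by decide

theorem pair_zero : ∀ k : Fin 5, k ≠ 0 → ∃ t : Fin 10, pa t = 0 ∧ pb t = k := by decide

theorem bit1023 : ∀ t : Fin 10, Nat.testBit 1023 t.val = true := by decide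

def cands : List (Option (Fin 5)) := none :: (List.finRange 5).map some

def mB (n : Nat) (c : Option (Fin 5)) (k : Fin 5) : Bool :=
  match c with
  | none => false
  | some v => capp n k.val == capp n v.val

def concB (n1 n2 n3 : Nat) : Bool := cands.any fun c1 => cands.any fun c2 => cands.any fun c3 =>
  (List.finRange 5).all fun k =>
    (mB n1 c1 k && mB n2 c2 k) || (mB n1 c1 k && mB n3 c3 k) || (mB n2 c2 k && mB n3 c3 k)

def ok3 : Bool := canonData.all fun p1 => p1.2 == 1023 ||
  canonData.all fun p2 => p2.2 == 1023 ||
  canonData.all fun p3 => p3.2 == 1023 ||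
  !(p1.2 ||| p2.2 ||| p3.2 == 1023) || !(p1.2 &&& p2.2 &&& p3.2 == 0) || concB p1.1 p2.1 p3.1

set_option maxRecDepth 100000 in
set_option maxHeartbeats 12000000 in
theorem ok3_true : ok3 = true := by decide

theorem fin3_cases (i : Fin 3) : i = 0 ∨ i = 1 ∨ i = 2 := by revert i; decide

set_option maxHeartbeats 2000000 in
theorem main_fin (f : Fin 3 → F5)
    (hc : ∀ i k, (f i) ((f i) k) = (f i) k ∧ (f i) k ≤ k)
    (hyp : ∀ a b : Fin 5, ∃ i, f i a = f i b)
    (dist : ∀ a b : Fin 5, a ≠ b → ∃ i, f i a ≠ f i b) :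
    (∃ i : Fin 3, ∀ k, f i k = f i 0) ∨
    (∃ c : Fin 3 → Option (Fin 5), ∀ k : Fin 5, ∃ i j : Fin 3, i ≠ j ∧
       (∃ v, c i = some v ∧ f i k = f i v) ∧ (∃ v, c j = some v ∧ f j k = f j v)) := by
  set n : Fin 3 → Nat := fun i => enc (f i) with hn
  have hmem : ∀ i, (n i, pm (n i)) ∈ canonData := fun i => enc_mem (f i) (hc i)
  have hbound : ∀ i, pm (n i) < 1024 := fun i => pm_bound _ (hmem i)
  have hbit : ∀ (i : Fin 3) (t : Fin 10),
      (Nat.testBit (pm (n i)) t.val = true) ↔ f i (pa t) = f i (pb t) := by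
    intro i t
    rw [pm_bit _ (hmem i) t, beq_iff_eq]
    show capp (n i) (pa t).val = capp (n i) (pb t).val ↔ _
    rw [capp_enc (f i) (pa t), capp_enc (f i) (pb t)]
    exact Fin.val_inj
  have hhigh : ∀ (m : Nat), m < 1024 → ∀ j : ℕ, ¬ j < 10 → Nat.testBit m j = false := by
    intro m hm j hj
    apply Nat.testBit_lt_two_pow
    calc m < 1024 := hm
    _ = 2^10 := rfl
    _ ≤ 2^j := Nat.pow_le_pow_right (by norm_num) (by omega)
  have horb : (pm (n 0) ||| pm (n 1) ||| pm (n 2)) = 1023 := by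
    apply Nat.eq_of_testBit_eq
    intro j
    by_cases hj : j < 10
    · obtain ⟨i, hi⟩ := hyp (pa ⟨j, hj⟩) (pb ⟨j, hj⟩)
      have hb : Nat.testBit (pm (n i)) j = true := (hbit i ⟨j, hj⟩).mpr hi
      have h1023 : Nat.testBit 1023 j = true := bit1023 ⟨j, hj⟩
      rw [Nat.testBit_or, Nat.testBit_or, h1023]
      rcases fin3_cases i with rfl|rfl|rfl <;> rw [hb] <;> simp
    · rw [Nat.testBit_or, Nat.testBit_or, hhigh _ (hbound 0) j hj, hhigh _ (hbound 1) j hj,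
        hhigh _ (hbound 2) j hj, hhigh 1023 (by norm_num) j hj]
      rfl
  have handb : (pm (n 0) &&& pm (n 1) &&& pm (n 2)) = 0 := by
    apply Nat.eq_of_testBit_eq
    intro j
    rw [Nat.zero_testBit, Nat.testBit_and, Nat.testBit_and]
    by_cases hj : j < 10
    · obtain ⟨i, hi⟩ := dist (pa ⟨j, hj⟩) (pb ⟨j, hj⟩) (pa_ne_pb ⟨j, hj⟩)
      have hb : Nat.testBit (pm (n i)) j = false :=
        Bool.eq_false_iff.mpr (fun hh => hi ((hbit i ⟨j, hj⟩).mp hh))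
      rcases fin3_cases i with rfl|rfl|rfl <;> rw [hb] <;> simp
    · rw [hhigh _ (hbound 0) j hj]
      simp
  have plane : ∀ i, pm (n i) = 1023 → ∀ k, f i k = f i 0 := by
    intro i hpm k
    by_cases hk : k = 0
    · rw [hk]
    · obtain ⟨t, hpa, hpb⟩ := pair_zero k hk
      have hb : Nat.testBit (pm (n i)) t.val = true := by rw [hpm]; exact bit1023 t
      have h2 := (hbit i t).mp hb
      rw [hpa, hpb] at h2
      exact h2.symm
  have mconv : ∀ (i : Fin 3) (cc : Option (Fin 5)) (k : Fin 5),
      mB (n i) cc k = true → ∃ v, cc = some v ∧ f i k = f i v := by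
    intro i cc k hm
    cases cc with
    | none => simp [mB] at hm
    | some v =>
      refine ⟨v, rfl, ?_⟩
      have h3 : capp (n i) k.val = capp (n i) v.val := by
        simp only [mB, beq_iff_eq] at hm
        exact hm
      rw [capp_enc (f i) k, capp_enc (f i) v] at h3
      exact Fin.val_inj.mp h3
  have H : _ = true := List.all_eq_true.mp ok3_true _ (hmem 0)
  rcases Bool.or_eq_true_iff.mp H with H | H
  · exact Or.inl ⟨0, plane 0 (beq_iff_eq.mp H)⟩
  have H2 : _ = true := List.all_eq_true.mp H _ (hmem 1)
  rcases Bool.or_eq_true_iff.mp H2 with H2 | H2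
  · exact Or.inl ⟨1, plane 1 (beq_iff_eq.mp H2)⟩
  have H3 : _ = true := List.all_eq_true.mp H2 _ (hmem 2)
  rcases Bool.or_eq_true_iff.mp H3 with H3 | Hconc
  swap
  · obtain ⟨c1, _, H4⟩ := List.any_eq_true.mp Hconc
    obtain ⟨c2, _, H5⟩ := List.any_eq_true.mp H4
    obtain ⟨c3, _, H6⟩ := List.any_eq_true.mp H5
    refine Or.inr ⟨![c1, c2, c3], fun k => ?_⟩
    have hk := List.all_eq_true.mp H6 k (List.mem_finRange k)
    simp only [Bool.or_eq_true, Bool.and_eq_true] at hk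
    rcases hk with (⟨h1, h2⟩ | ⟨h1, h2⟩) | ⟨h1, h2⟩
    · exact ⟨0, 1, by decide, mconv 0 c1 k h1, mconv 1 c2 k h2⟩
    · exact ⟨0, 2, by decide, mconv 0 c1 k h1, mconv 2 c3 k h2⟩
    · exact ⟨1, 2, by decide, mconv 1 c2 k h1, mconv 2 c3 k h2⟩
  rcases Bool.or_eq_true_iff.mp H3 with H3 | H3
  swap
  · exfalso
    rw [Bool.not_eq_true'] at H3
    rw [handb] at H3
    simp at H3
  rcases Bool.or_eq_true_iff.mp H3 with H3 | H3
  · exact Or.inl ⟨2, plane 2 (beq_iff_eq.mp H3)⟩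
  · exfalso
    rw [Bool.not_eq_true'] at H3
    rw [horb] at H3
    simp at H3

/-- Structure of independent sets of size 5 in `G₃` (any two points agree in some
coordinate): either the set is coplanar, or it lies in the union of the three
axis-parallel lines through a common point `p` (i.e. every point of the set agrees
with `p` in at least two coordinates). -/
theorem stmt10 (I : Finset (Fin 3 → ℕ)) (hcard : I.card = 5)
    (hind : ∀ x ∈ I, ∀ y ∈ I, ∃ i : Fin 3, x i = y i) :
    (∃ (i : Fin 3) (a : ℕ), ∀ x ∈ I, x i = a) ∨
    (∃ p : Fin 3 → ℕ, ∀ x ∈ I, ∃ i j : Fin 3, i ≠ j ∧ x i = p i ∧ x j = p j) := by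
  obtain ⟨g, hsurj, hgmem, hginj⟩ : ∃ g : Fin 5 → Fin 3 → ℕ,
      (∀ x ∈ I, ∃ k, g k = x) ∧ (∀ k, g k ∈ I) ∧ Function.Injective g := by
    have e := Finset.equivFinOfCardEq hcard
    refine ⟨fun k => (e.symm k).1, fun x hx => ⟨e ⟨x, hx⟩, by simp⟩, fun k => (e.symm k).2,
      fun a b h => e.symm.injective (Subtype.ext h)⟩
  have hhyp : ∀ a b : Fin 5, ∃ i, rep g i a = rep g i b := by
    intro a b
    obtain ⟨i, hi⟩ := hind (g a) (hgmem a) (g b) (hgmem b)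
    exact ⟨i, rep_mono g i a b hi⟩
  have hdist : ∀ a b : Fin 5, a ≠ b → ∃ i, rep g i a ≠ rep g i b := by
    intro a b hab
    have hne : g a ≠ g b := fun hh => hab (hginj hh)
    obtain ⟨i, hgi⟩ := Function.ne_iff.mp hne
    exact ⟨i, fun hri => hgi (rep_faithful g i a b hri)⟩
  rcases main_fin (fun i => rep g i) (fun i k => rep_canon g i k) hhyp hdist with
    ⟨i, hi⟩ | ⟨c, hc2⟩
  · refine Or.inl ⟨i, g 0 i, fun x hx => ?_⟩
    obtain ⟨k, rfl⟩ := hsurj x hx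
    exact rep_faithful g i k 0 (hi k)
  · refine Or.inr ⟨fun i => (c i).elim 0 (fun v => g v i), fun x hx => ?_⟩
    obtain ⟨k, rfl⟩ := hsurj x hx
    obtain ⟨i, j, hij, ⟨v, hv, hfv⟩, ⟨w, hw, hfw⟩⟩ := hc2 k
    refine ⟨i, j, hij, ?_, ?_⟩
    · show g k i = (c i).elim 0 fun v => g v i
      rw [hv]
      exact rep_faithful g i k v hfv
    · show g k j = (c j).elim 0 fun v => g v j
      rw [hw]
      exact rep_faithful g j k w hfw
end

section
/- The following two statements are equivalent for k = l+1: (A) For every k-colouring of the edges of K_n there exist vertex sets A₁,...,A_{k−1} covering all vertices and colours c₁,...,c_{k−1} such that each K_n[A_i, c_i] is connected. (B) For every finite set X ⊆ ℕ^l there exist sets X₁,...,X_l ⊆ X covering X such that each X_i is either contained in a hyperplane {x : x_i = c} for some coordinate i and value c, or the induced subgraph G_l[X_i] is connected. -/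
lemma monoGraph_adj {n k : ℕ} (χ : Sym2 (Fin n) → Fin k) (c : Fin k) (x y : Fin n) :
    (monoGraph χ c).Adj x y ↔ x ≠ y ∧ χ s(x, y) = c := Iff.rfl

lemma Gl_adj (l : ℕ) (x y : Fin l → ℕ) :
    (Gl l).Adj x y ↔ x ≠ y ∧ ∀ i, x i ≠ y i := Iff.rfl

/-- Values of a function constant along edges are constant along walks. -/
lemma walk_eq {α : Type*} {G : SimpleGraph α} (g : α → ℕ)
    (h : ∀ a b, G.Adj a b → g a = g b) {u v : α} (p : G.Walk u v) : g u = g v := by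
  induction p with
  | nil => rfl
  | cons ha _ ih => exact (h _ _ ha).trans ih

/-- A walk starting in a set closed under adjacency stays in the set, and yields
reachability in the induced graph. -/
lemma induce_walk_closed {α : Type*} {G : SimpleGraph α} {s : Set α}
    (hcl : ∀ ⦃a b⦄, a ∈ s → G.Adj a b → b ∈ s) {u v : α} (p : G.Walk u v) :
    ∀ hu : u ∈ s, ∃ hv : v ∈ s, (G.induce s).Reachable ⟨u, hu⟩ ⟨v, hv⟩ := by
  induction p with
  | nil => exact fun hu => ⟨hu, SimpleGraph.Reachable.refl _⟩
  | @cons a b c hab p ih =>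
    intro hu
    have hb : b ∈ s := hcl hu hab
    obtain ⟨hv, hr⟩ := ih hb
    exact ⟨hv, (SimpleGraph.Adj.reachable
      (show (G.induce s).Adj ⟨a, hu⟩ ⟨b, hb⟩ from hab)).trans hr⟩

/-- Mapping reachability forward through a graph homomorphism-like map on induced subgraphs. -/
lemma reach_map {α β : Type*} {G : SimpleGraph α} {H : SimpleGraph β} {s : Set α} {t : Set β}
    (m : α → β) (hm : ∀ a ∈ s, m a ∈ t)
    (hadj : ∀ a b : α, a ∈ s → b ∈ s → G.Adj a b → H.Adj (m a) (m b))
    {x y : ↥s} (h : (G.induce s).Reachable x y) :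
    (H.induce t).Reachable ⟨m x, hm x x.2⟩ ⟨m y, hm y y.2⟩ := by
  obtain ⟨p⟩ := h
  induction p with
  | nil => exact SimpleGraph.Reachable.refl _
  | @cons a b c hab p ih =>
    exact (SimpleGraph.Adj.reachable
      (show (H.induce t).Adj ⟨m a, hm a a.2⟩ ⟨m b, hm b b.2⟩ from
        hadj a b a.2 b.2 hab)).trans ih

/-- Lifting a walk along a surjection whose fibers can be chosen freely, with
prescribed preimages at the (distinct) endpoints. -/
lemma lift_reach {α β : Type*} {G : SimpleGraph α} {H : SimpleGraph β} (f : β → α) {s : Set α}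
    (hsurj : ∀ x ∈ s, ∃ u, f u = x)
    (hadj : ∀ u v : β, G.Adj (f u) (f v) → H.Adj u v) :
    ∀ {x y : ↥s} (_ : (G.induce s).Walk x y) (u v : β) (hu : f u ∈ s) (hv : f v ∈ s),
      f u = ↑x → f v = ↑y → (↑x : α) ≠ ↑y →
      (H.induce (f ⁻¹' s)).Reachable ⟨u, hu⟩ ⟨v, hv⟩ := by
  intro x y p
  induction p with
  | nil => exact fun u v hu hv hfu hfv hxy => absurd rfl hxy
  | @cons a b c hab p ih =>
    intro u v hu hv hfu hfv hxy
    by_cases hbc : (b : α) = (c : α)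
    · have : G.Adj (f u) (f v) := by
        rw [hfu, hfv, ← hbc]; exact hab
      exact SimpleGraph.Adj.reachable
        (show (H.induce (f ⁻¹' s)).Adj ⟨u, hu⟩ ⟨v, hv⟩ from hadj u v this)
    · obtain ⟨w, hw⟩ := hsurj b b.2
      have hwmem : f w ∈ s := by rw [hw]; exact b.2
      have h1 : G.Adj (f u) (f w) := by rw [hfu, hw]; exact hab
      have h2 := ih w v hwmem hv hw hfv hbc
      exact (SimpleGraph.Adj.reachable
        (show (H.induce (f ⁻¹' s)).Adj ⟨u, hu⟩ ⟨w, hwmem⟩ from hadj u w h1)).trans h2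

/-- The component map: vertex `v` is sent to the tuple of (representatives of) its
connected components in colours `0, …, l-1`. -/
noncomputable def compMap {n l : ℕ} (χ : Sym2 (Fin n) → Fin (l + 1)) (v : Fin n) (j : Fin l) :
    ℕ :=
  (((monoGraph χ j.castSucc).connectedComponentMk v).out : Fin n).val

lemma compMap_eq_iff {n l : ℕ} (χ : Sym2 (Fin n) → Fin (l + 1)) (u v : Fin n) (j : Fin l) :
    compMap χ u j = compMap χ v j ↔ (monoGraph χ j.castSucc).Reachable u v := by
  rw [← SimpleGraph.ConnectedComponent.eq]
  constructor
  · intro h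
    have h2 := Fin.val_injective h
    rw [← Quot.out_eq ((monoGraph χ j.castSucc).connectedComponentMk u),
        ← Quot.out_eq ((monoGraph χ j.castSucc).connectedComponentMk v), h2]
  · intro h
    unfold compMap
    rw [h]

/-- Colour of a pair of tuples: the least coordinate where they agree, or `last` if none. -/
noncomputable def colOf (l : ℕ) (x y : Fin l → ℕ) : Fin (l + 1) :=
  if h : (Finset.univ.filter fun i => x i = y i).Nonempty then
    ((Finset.univ.filter fun i => x i = y i).min' h).castSucc
  else Fin.last l

lemma colOf_symm (l : ℕ) (x y : Fin l → ℕ) : colOf l x y = colOf l y x := by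
  have hset : (Finset.univ.filter fun i => x i = y i)
      = (Finset.univ.filter fun i => y i = x i) := by
    ext i; simp [eq_comm]
  unfold colOf
  rw [hset]

lemma colOf_eq_castSucc {l : ℕ} {x y : Fin l → ℕ} {j : Fin l}
    (h : colOf l x y = j.castSucc) : x j = y j := by
  unfold colOf at h
  split at h
  · have hmin := Finset.min'_mem _ ‹(Finset.univ.filter fun i => x i = y i).Nonempty›
    have := Fin.castSucc_injective l h
    rw [this] at hmin
    simpa using hmin
  · exfalso
    have := congrArg Fin.val h
    simp [Fin.last] at this
    omega

lemma colOf_eq_last {l : ℕ} {x y : Fin l → ℕ} (h : colOf l x y = Fin.last l) :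
    ∀ i, x i ≠ y i := by
  unfold colOf at h
  split at h
  · exfalso
    have := congrArg Fin.val h
    have hlt := (((Finset.univ.filter fun i => x i = y i)).min'
      ‹(Finset.univ.filter fun i => x i = y i).Nonempty›).isLt
    simp [Fin.last] at this
    omega
  · intro i hi
    next hne =>
    exact hne ⟨i, by simpa using hi⟩

/-- Equivalence, for `k = l + 1`, between:
(A) every `k`-colouring of `E(Kₙ)` admits a cover of the vertices by `k - 1 = l`
monochromatic connected sets; and
(B) every finite `X ⊆ ℕ^l` can be covered by `l` subsets, each contained in a
hyperplane `{x : x j = c}` or inducing a connected subgraph of `G_l`. -/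
theorem stmt11 (l : ℕ) (hl : 1 ≤ l) :
    (∀ (n : ℕ) (χ : Sym2 (Fin n) → Fin (l + 1)),
      ∃ (A : Fin l → Set (Fin n)) (c : Fin l → Fin (l + 1)),
        (∀ v, ∃ i, v ∈ A i) ∧
        ∀ i, ((monoGraph χ (c i)).induce (A i)).Preconnected) ↔
    (∀ X : Finset (Fin l → ℕ),
      ∃ Xs : Fin l → Set (Fin l → ℕ),
        (∀ i, Xs i ⊆ ↑X) ∧ (∀ x ∈ X, ∃ i, x ∈ Xs i) ∧
        ∀ i, (∃ (j : Fin l) (cv : ℕ), ∀ x ∈ Xs i, x j = cv) ∨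
          ((Gl l).induce (Xs i)).Preconnected) := by
  constructor
  · -- (A) → (B)
    intro hA X
    set φ : Fin X.card → (Fin l → ℕ) := fun a => ↑(X.equivFin.symm a) with hφ
    set χ : Sym2 (Fin X.card) → Fin (l + 1) :=
      Sym2.lift ⟨fun a b => colOf l (φ a) (φ b), fun a b => colOf_symm l (φ a) (φ b)⟩ with hχ
    have hχmk : ∀ a b : Fin X.card, χ s(a, b) = colOf l (φ a) (φ b) := fun a b => rfl
    obtain ⟨A, c, hcov, hpre⟩ := hA X.card χ
    have hex : ∀ i : Fin l, ∃ Xsi : Set (Fin l → ℕ), Xsi ⊆ ↑X ∧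
        (∀ a ∈ A i, φ a ∈ Xsi) ∧
        ((∃ j cv, ∀ x ∈ Xsi, x j = cv) ∨ ((Gl l).induce Xsi).Preconnected) := by
      intro i
      refine ⟨φ '' A i, ?_, fun a ha => ⟨a, ha, rfl⟩, ?_⟩
      · rintro x ⟨a, _, rfl⟩
        exact (X.equivFin.symm a).2
      rcases eq_or_ne (c i) (Fin.last l) with hlast | hne
      · -- connected case
        right
        have hadj : ∀ a b : Fin X.card, a ∈ A i → b ∈ A i →
            (monoGraph χ (c i)).Adj a b → (Gl l).Adj (φ a) (φ b) := by
          intro a b _ _ hab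
          have hab2 : χ s(a, b) = c i := hab.2
          have hcol : colOf l (φ a) (φ b) = Fin.last l :=
            (hχmk a b).symm.trans (hab2.trans hlast)
          have hall := colOf_eq_last hcol
          have hne0 : φ a ≠ φ b := fun h => hall ⟨0, hl⟩ (congrFun h ⟨0, hl⟩)
          exact (Gl_adj l (φ a) (φ b)).mpr ⟨hne0, hall⟩
        rintro ⟨x, hx⟩ ⟨y, hy⟩
        obtain ⟨a, ha, rfl⟩ := hx
        obtain ⟨b, hb, rfl⟩ := hy
        exact reach_map (t := φ '' A i) φ (fun a ha => Set.mem_image_of_mem φ ha) hadj (hpre i ⟨a, ha⟩ ⟨b, hb⟩)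
      · -- hyperplane case
        left
        obtain ⟨j, hj⟩ := Fin.exists_castSucc_eq.mpr hne
        by_cases hAne : (A i).Nonempty
        · obtain ⟨a₀, ha₀⟩ := hAne
          refine ⟨j, φ a₀ j, ?_⟩
          rintro x ⟨a, ha, rfl⟩
          obtain ⟨p⟩ := hpre i ⟨a₀, ha₀⟩ ⟨a, ha⟩
          refine (walk_eq (fun b : ↥(A i) => φ ↑b j) ?_ p).symm
          intro b₁ b₂ hadj
          have hadj2 : χ s((b₁ : Fin X.card), (b₂ : Fin X.card)) = c i := hadj.2
          have hcol : colOf l (φ ↑b₁) (φ ↑b₂) = j.castSucc :=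
            ((hχmk ↑b₁ ↑b₂).symm.trans hadj2).trans hj.symm
          exact colOf_eq_castSucc hcol
        · exact ⟨j, 0, by rintro x ⟨a, ha, rfl⟩; exact absurd ⟨a, ha⟩ hAne⟩
    choose Xs hsub hcov' hdisj using hex
    refine ⟨Xs, hsub, ?_, hdisj⟩
    intro x hx
    obtain ⟨i, hi⟩ := hcov (X.equivFin ⟨x, hx⟩)
    refine ⟨i, ?_⟩
    have := hcov' i _ hi
    simpa [hφ, Equiv.symm_apply_apply] using this
  · -- (B) → (A)
    intro hB n χ
    set f : Fin n → Fin l → ℕ := fun v j => compMap χ v j with hf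
    obtain ⟨Xs, hXsub, hXcov, hXs⟩ := hB (Finset.univ.image f)
    have hkey : ∀ u v : Fin n, (∀ i, f u i ≠ f v i) →
        (monoGraph χ (Fin.last l)).Adj u v := by
      intro u v hne
      have huv : u ≠ v := fun h => hne ⟨0, hl⟩ (by rw [h])
      refine ⟨huv, ?_⟩
      by_contra hc
      obtain ⟨j, hj⟩ := Fin.exists_castSucc_eq.mpr hc
      exact hne j ((compMap_eq_iff χ u v j).mpr
        (SimpleGraph.Adj.reachable ⟨huv, hj.symm⟩))
    have hsurj : ∀ i : Fin l, ∀ x ∈ Xs i, ∃ u : Fin n, f u = x := by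
      intro i x hx
      have := hXsub i hx
      simp only [Finset.coe_image, Set.mem_image, Finset.mem_coe] at this
      obtain ⟨u, _, hu⟩ := this
      exact ⟨u, hu⟩
    -- hyperplane construction
    have hplane : ∀ (i j : Fin l) (cv : ℕ), (∀ x ∈ Xs i, x j = cv) →
        ∃ (Ai : Set (Fin n)) (ci : Fin (l + 1)), (∀ v, f v ∈ Xs i → v ∈ Ai) ∧
          ((monoGraph χ ci).induce Ai).Preconnected := by
      intro i j cv hcv
      refine ⟨{v | f v j = cv}, j.castSucc, fun v hv => hcv _ hv, ?_⟩
      rintro ⟨u, hu⟩ ⟨v, hv⟩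
      have hreach : (monoGraph χ j.castSucc).Reachable u v :=
        (compMap_eq_iff χ u v j).mp (hu.trans hv.symm)
      obtain ⟨p⟩ := hreach
      have hcl : ∀ ⦃a b : Fin n⦄, a ∈ {v | f v j = cv} →
          (monoGraph χ j.castSucc).Adj a b → b ∈ {v | f v j = cv} := by
        intro a b ha hab
        have := (compMap_eq_iff χ a b j).mpr hab.reachable
        exact (this.symm.trans ha : f b j = cv)
      obtain ⟨hv', hr⟩ := induce_walk_closed hcl p hu
      exact hr
    have hex : ∀ i : Fin l, ∃ (Ai : Set (Fin n)) (ci : Fin (l + 1)),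
        (∀ v, f v ∈ Xs i → v ∈ Ai) ∧ ((monoGraph χ ci).induce Ai).Preconnected := by
      intro i
      rcases hXs i with ⟨j, cv, hjc⟩ | hconn
      · exact hplane i j cv hjc
      by_cases h2 : ∃ p ∈ Xs i, ∃ q ∈ Xs i, p ≠ q
      · obtain ⟨p0, hp0, q0, hq0, hpq⟩ := h2
        refine ⟨f ⁻¹' Xs i, Fin.last l, fun v hv => hv, ?_⟩
        have hadj : ∀ u v : Fin n, (Gl l).Adj (f u) (f v) →
            (monoGraph χ (Fin.last l)).Adj u v := fun u v h => hkey u v h.2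
        rintro ⟨u, hu⟩ ⟨v, hv⟩
        by_cases heq : f u = f v
        · by_cases huv : u = v
          · subst huv; exact SimpleGraph.Reachable.refl _
          · have hx' : ∃ x' ∈ Xs i, x' ≠ f u := by
              by_cases h : p0 = f u
              · exact ⟨q0, hq0, fun hh => hpq (h.trans hh.symm)⟩
              · exact ⟨p0, hp0, h⟩
            obtain ⟨x', hx'mem, hx'ne⟩ := hx'
            obtain ⟨w, hw⟩ := hsurj i x' hx'mem
            have hwmem : f w ∈ Xs i := by rw [hw]; exact hx'mem
            obtain ⟨pw⟩ := hconn ⟨f u, hu⟩ ⟨x', hx'mem⟩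
            have r1 := lift_reach f (hsurj i) hadj pw u w hu hwmem rfl hw hx'ne.symm
            have r2 := lift_reach f (hsurj i) hadj pw v w hv hwmem heq.symm hw hx'ne.symm
            exact r1.trans r2.symm
        · obtain ⟨pw⟩ := hconn ⟨f u, hu⟩ ⟨f v, hv⟩
          exact lift_reach f (hsurj i) hadj pw u v hu hv rfl rfl heq
      · push_neg at h2
        by_cases hne : ∃ x, x ∈ Xs i
        · obtain ⟨x, hx⟩ := hne
          exact hplane i ⟨0, hl⟩ (x ⟨0, hl⟩) (fun y hy => by rw [h2 y hy x hx])
        · exact hplane i ⟨0, hl⟩ 0 (fun y hy => absurd ⟨y, hy⟩ hne)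
    choose A c hAcov hApre using hex
    refine ⟨A, c, ?_, hApre⟩
    intro v
    obtain ⟨i, hi⟩ := hXcov (f v) (Finset.mem_image_of_mem f (Finset.mem_univ v))
    exact ⟨i, hAcov i v hi⟩
end

section
/- If three points p, q, r of a finite set X ⊆ ℕ³ lie on a common line and belong to three pairwise distinct connected components of the induced subgraph G₃[X], then X can be covered by two planes: there exist two coordinates i, j and values a, b such that every x ∈ X satisfies x_i = a or x_j = b. -/
/-- If three points of a finite `X ⊆ ℕ³` lie on a common line but lie in three pairwise
distinct connected components of the induced subgraph `G₃[X]`, then `X` is covered by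
two planes. -/
theorem stmt12 (X : Set (Fin 3 → ℕ)) (hfin : X.Finite) (p q r : Fin 3 → ℕ)
    (hp : p ∈ X) (hq : q ∈ X) (hr : r ∈ X)
    (hline : ∃ i j : Fin 3, i ≠ j ∧ p i = q i ∧ q i = r i ∧ p j = q j ∧ q j = r j)
    (hpq : ¬ ((Gl 3).induce X).Reachable ⟨p, hp⟩ ⟨q, hq⟩)
    (hpr : ¬ ((Gl 3).induce X).Reachable ⟨p, hp⟩ ⟨r, hr⟩)
    (hqr : ¬ ((Gl 3).induce X).Reachable ⟨q, hq⟩ ⟨r, hr⟩) :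
    ∃ (i j : Fin 3) (a b : ℕ), ∀ x ∈ X, x i = a ∨ x j = b := by
  obtain ⟨i, j, hij, h1, h2, h3, h4⟩ := hline
  have hpq' : p ≠ q := by rintro rfl; exact hpq (SimpleGraph.Reachable.refl _)
  have hpr' : p ≠ r := by rintro rfl; exact hpr (SimpleGraph.Reachable.refl _)
  have hqr' : q ≠ r := by rintro rfl; exact hqr (SimpleGraph.Reachable.refl _)
  obtain ⟨k, hk⟩ := Function.ne_iff.mp hpq'
  have hki : k ≠ i := fun h => hk (h ▸ h1)
  have hkj : k ≠ j := fun h => hk (h ▸ h3)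
  have third : ∀ m : Fin 3, m ≠ i → m ≠ j → m = k := by
    intro m hmi hmj
    have := i.isLt; have := j.isLt; have := k.isLt; have := m.isLt
    have e1 : i.val ≠ j.val := fun h => hij (Fin.ext h)
    have e2 : k.val ≠ i.val := fun h => hki (Fin.ext h)
    have e3 : k.val ≠ j.val := fun h => hkj (Fin.ext h)
    have e4 : m.val ≠ i.val := fun h => hmi (Fin.ext h)
    have e5 : m.val ≠ j.val := fun h => hmj (Fin.ext h)
    exact Fin.ext (by omega)
  have hqrk : q k ≠ r k := by
    obtain ⟨m, hm⟩ := Function.ne_iff.mp hqr'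
    have hmi : m ≠ i := fun h => hm (h ▸ h2)
    have hmj : m ≠ j := fun h => hm (h ▸ h4)
    exact (third m hmi hmj) ▸ hm
  have hprk : p k ≠ r k := by
    obtain ⟨m, hm⟩ := Function.ne_iff.mp hpr'
    have hmi : m ≠ i := fun h => hm (h ▸ h1.trans h2)
    have hmj : m ≠ j := fun h => hm (h ▸ h3.trans h4)
    exact (third m hmi hmj) ▸ hm
  refine ⟨i, j, p i, p j, fun x hx => ?_⟩
  by_contra hc
  push_neg at hc
  obtain ⟨hxi, hxj⟩ := hc
  have adj : ∀ s : Fin 3 → ℕ, s i = p i → s j = p j → x k ≠ s k → (Gl 3).Adj x s := by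
    intro s hsi hsj hsk
    refine ⟨fun h => hxi (by rw [h, hsi]), fun m => ?_⟩
    by_cases hmi : m = i
    · subst hmi; rw [hsi]; exact hxi
    by_cases hmj : m = j
    · subst hmj; rw [hsj]; exact hxj
    · rw [third m hmi hmj]; exact hsk
  have reach : ∀ (s t : Fin 3 → ℕ) (hs : s ∈ X) (ht : t ∈ X),
      (Gl 3).Adj x s → (Gl 3).Adj x t →
      ((Gl 3).induce X).Reachable ⟨s, hs⟩ ⟨t, ht⟩ := by
    intro s t hs ht has hat
    have e1 : ((Gl 3).induce X).Adj ⟨s, hs⟩ ⟨x, hx⟩ := has.symm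
    have e2 : ((Gl 3).induce X).Adj ⟨x, hx⟩ ⟨t, ht⟩ := hat
    exact e1.reachable.trans e2.reachable
  by_cases hxp : x k = p k
  · exact hqr (reach q r hq hr
      (adj q h1.symm h3.symm (by rw [hxp]; exact hk))
      (adj r (h1.trans h2).symm (h3.trans h4).symm (by rw [hxp]; exact hprk)))
  by_cases hxq : x k = q k
  · exact hpr (reach p r hp hr (adj p rfl rfl hxp)
      (adj r (h1.trans h2).symm (h3.trans h4).symm (by rw [hxq]; exact hqrk)))
  · exact hpq (reach p q hp hq (adj p rfl rfl hxp) (adj q h1.symm h3.symm hxq))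
end

section
/- Let χ be a 4-colouring of E(K_n) with colours c ≠ c'. Suppose C is a connected component of the colour-c subgraph and C' is a connected component of the colour-c' subgraph with C ∩ C' = ∅ and C' nonempty, and suppose that the colouring admits no cover of the vertices by three monochromatic connected subgraphs of diameter at most 160. Then for every pair of vertices x, y ∈ C, either d_c(x,y) ≤ 6 or d_{c'}(x,y) ≤ 6. -/
open SimpleGraph in
lemma star160 {V : Type*} (G : SimpleGraph V) (A : Set V) (t : V) (ht : t ∈ A)
    (h : ∀ w, w ∈ A → w = t ∨ G.Adj t w ∨ ∃ u, u ∈ A ∧ G.Adj t u ∧ G.Adj u w) :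
    (G.induce A).Preconnected ∧ ∀ p q : A, (G.induce A).dist p q ≤ 160 := by
  have key : ∀ p : A, ∃ w : (G.induce A).Walk ⟨t, ht⟩ p, w.length ≤ 2 := by
    rintro ⟨p, hp⟩
    rcases h p hp with rfl | hadj | ⟨u, hu, h1, h2⟩
    · exact ⟨Walk.nil, by simp⟩
    · exact ⟨Walk.cons (show (G.induce A).Adj ⟨t,ht⟩ ⟨p,hp⟩ from hadj) Walk.nil, by simp⟩
    · exact ⟨Walk.cons (show (G.induce A).Adj ⟨t,ht⟩ ⟨u,hu⟩ from h1)
        (Walk.cons (show (G.induce A).Adj ⟨u,hu⟩ ⟨p,hp⟩ from h2) Walk.nil), by simp⟩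
  constructor
  · intro p q
    obtain ⟨w1, _⟩ := key p
    obtain ⟨w2, _⟩ := key q
    exact (w1.reachable.symm).trans w2.reachable
  · intro p q
    obtain ⟨w1, h1⟩ := key p
    obtain ⟨w2, h2⟩ := key q
    calc (G.induce A).dist p q ≤ (w1.reverse.append w2).length := SimpleGraph.dist_le _
      _ = w1.length + w2.length := by simp
      _ ≤ 160 := by omega

/-- A union of (up to) three monochromatic stars with centres `t₁ t₂ t₃`. -/
def star2set {n : ℕ} (χ : Sym2 (Fin n) → Fin 4) (e : Fin 4) (t₁ t₂ t₃ : Fin n) : Set (Fin n) :=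
  {w | w = t₁ ∨ w = t₂ ∨ w = t₃ ∨ (monoGraph χ e).Adj t₁ w ∨ (monoGraph χ e).Adj t₂ w ∨
    (monoGraph χ e).Adj t₃ w}

lemma star2set_good {n : ℕ} (χ : Sym2 (Fin n) → Fin 4) (e : Fin 4) (t₁ t₂ t₃ : Fin n)
    (h2 : t₂ = t₁ ∨ (monoGraph χ e).Adj t₁ t₂) (h3 : t₃ = t₁ ∨ (monoGraph χ e).Adj t₁ t₃) :
    ((monoGraph χ e).induce (star2set χ e t₁ t₂ t₃)).Preconnected ∧
    ∀ p q : (star2set χ e t₁ t₂ t₃),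
      ((monoGraph χ e).induce (star2set χ e t₁ t₂ t₃)).dist p q ≤ 160 := by
  apply star160 _ _ t₁ (Or.inl rfl)
  intro w hw
  rcases hw with rfl | rfl | rfl | h | h | h
  · exact Or.inl rfl
  · rcases h2 with rfl | h2
    · exact Or.inl rfl
    · exact Or.inr (Or.inl h2)
  · rcases h3 with rfl | h3
    · exact Or.inl rfl
    · exact Or.inr (Or.inl h3)
  · exact Or.inr (Or.inl h)
  · rcases h2 with rfl | h2
    · exact Or.inr (Or.inl h)
    · exact Or.inr (Or.inr ⟨t₂, Or.inr (Or.inl rfl), h2, h⟩)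
  · rcases h3 with rfl | h3
    · exact Or.inr (Or.inl h)
    · exact Or.inr (Or.inr ⟨t₃, Or.inr (Or.inr (Or.inl rfl)), h3, h⟩)

lemma fourth : ∀ c c' α : Fin 4, c ≠ c' → α ≠ c → α ≠ c' →
    ∃ β : Fin 4, β ≠ c ∧ β ≠ c' ∧ β ≠ α ∧ ∀ e : Fin 4, e = α ∨ e = β ∨ e = c ∨ e = c' := by
  intro c c' α
  fin_cases c <;> fin_cases c' <;> fin_cases α <;> decide

lemma trich4 {a b c d : Prop} (h : a ∨ b ∨ c ∨ d) : a ∨ b ∨ (c ∨ d) := by tauto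

section memhelpers
variable {γ : Type*} {A B D : Set γ} {w : γ}
lemma mu1 (h : w ∈ A) : w ∈ A ∪ B ∪ D := Or.inl (Or.inl h)
lemma mu2 (h : w ∈ B) : w ∈ A ∪ B ∪ D := Or.inl (Or.inr h)
lemma mu3 (h : w ∈ D) : w ∈ A ∪ B ∪ D := Or.inr h
end memhelpers

section smhelpers
variable {n : ℕ} {χ : Sym2 (Fin n) → Fin 4} {e : Fin 4} {t₁ t₂ t₃ w : Fin n}
lemma sm1 (h : w = t₁) : w ∈ star2set χ e t₁ t₂ t₃ := Or.inl h
lemma sm2 (h : w = t₂) : w ∈ star2set χ e t₁ t₂ t₃ := Or.inr (Or.inl h)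
lemma sm3 (h : w = t₃) : w ∈ star2set χ e t₁ t₂ t₃ := Or.inr (Or.inr (Or.inl h))
lemma sm4 (h : (monoGraph χ e).Adj t₁ w) : w ∈ star2set χ e t₁ t₂ t₃ :=
  Or.inr (Or.inr (Or.inr (Or.inl h)))
lemma sm5 (h : (monoGraph χ e).Adj t₂ w) : w ∈ star2set χ e t₁ t₂ t₃ :=
  Or.inr (Or.inr (Or.inr (Or.inr (Or.inl h))))
lemma sm6 (h : (monoGraph χ e).Adj t₃ w) : w ∈ star2set χ e t₁ t₂ t₃ :=
  Or.inr (Or.inr (Or.inr (Or.inr (Or.inr h))))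
end smhelpers

/-- If a connected component `C` of the colour-`c` subgraph is disjoint from a nonempty
connected component `C'` of the colour-`c'` subgraph (with `c ≠ c'`), and the colouring
admits no cover of the vertices by three monochromatic connected sets of diameter at
most 160, then any two vertices of `C` are at colour-`c` distance at most 6 or at
colour-`c'` distance at most 6. -/
theorem stmt19 (n : ℕ) (χ : Sym2 (Fin n) → Fin 4) (c c' : Fin 4) (hcc : c ≠ c')
    (C C' : Set (Fin n))
    (hC : ∃ v, C = {u | (monoGraph χ c).Reachable v u})
    (hC' : ∃ v, C' = {u | (monoGraph χ c').Reachable v u})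
    (hdisj : Disjoint C C') (hne : C'.Nonempty)
    (hnocover : ¬ ∃ (A₁ A₂ A₃ : Set (Fin n)) (c₁ c₂ c₃ : Fin 4),
      A₁ ∪ A₂ ∪ A₃ = Set.univ ∧
      (((monoGraph χ c₁).induce A₁).Preconnected ∧
        ∀ x y : A₁, ((monoGraph χ c₁).induce A₁).dist x y ≤ 160) ∧
      (((monoGraph χ c₂).induce A₂).Preconnected ∧
        ∀ x y : A₂, ((monoGraph χ c₂).induce A₂).dist x y ≤ 160) ∧
      (((monoGraph χ c₃).induce A₃).Preconnected ∧
        ∀ x y : A₃, ((monoGraph χ c₃).induce A₃).dist x y ≤ 160)) :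
    ∀ x ∈ C, ∀ y ∈ C,
      (monoGraph χ c).dist x y ≤ 6 ∨
      ((monoGraph χ c').Reachable x y ∧ (monoGraph χ c').dist x y ≤ 6) := by
  intro x hx y hy
  by_contra hcon
  push_neg at hcon
  obtain ⟨hd1, hd2⟩ := hcon
  obtain ⟨v₀, hCdef⟩ := hC
  obtain ⟨v₀', hC'def⟩ := hC'
  have hCadj : ∀ {u w : Fin n}, u ∈ C → (monoGraph χ c).Adj u w → w ∈ C := by
    intro u w hu ha
    rw [hCdef] at hu ⊢
    exact hu.trans ha.reachable
  have hC'adj : ∀ {u w : Fin n}, u ∈ C' → (monoGraph χ c').Adj u w → w ∈ C' := by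
    intro u w hu ha
    rw [hC'def] at hu ⊢
    exact hu.trans ha.reachable
  have hnotin : ∀ {u : Fin n}, u ∈ C → u ∉ C' := fun hu hu' => Set.disjoint_left.mp hdisj hu hu'
  have hsy : ∀ u w : Fin n, χ s(u,w) = χ s(w,u) := fun u w => by rw [Sym2.eq_swap]
  have hadj1 : ∀ (e : Fin 4) (u w : Fin n), (monoGraph χ e).Adj u w →
      (monoGraph χ e).dist u w ≤ 6 := by
    intro e u w h
    have h1 := SimpleGraph.dist_le (SimpleGraph.Walk.cons h SimpleGraph.Walk.nil)
    simp at h1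
    omega
  have hpath2 : ∀ (e : Fin 4) (u w z : Fin n), (monoGraph χ e).Adj u w →
      (monoGraph χ e).Adj w z →
      (monoGraph χ e).Reachable u z ∧ (monoGraph χ e).dist u z ≤ 6 := by
    intro e u w z h1 h2
    refine ⟨(SimpleGraph.Walk.cons h1 (SimpleGraph.Walk.cons h2 SimpleGraph.Walk.nil)).reachable, ?_⟩
    have h3 := SimpleGraph.dist_le (SimpleGraph.Walk.cons h1
      (SimpleGraph.Walk.cons h2 SimpleGraph.Walk.nil))
    simp at h3
    omega
  have hxy : x ≠ y := by
    rintro rfl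
    rw [SimpleGraph.dist_self] at hd1
    omega
  have hxyc : χ s(x,y) ≠ c := by
    intro h
    have := hadj1 c x y ⟨hxy, h⟩
    omega
  have hxyc' : χ s(x,y) ≠ c' := by
    intro h
    have hr : (monoGraph χ c').Adj x y := ⟨hxy, h⟩
    have h1 := hadj1 c' x y hr
    have h2 := hd2 hr.reachable
    omega
  have hno2 : ∀ w : Fin n, x ≠ w → w ≠ y → ¬(χ s(x,w) = c' ∧ χ s(w,y) = c') := by
    rintro w hxw hwy ⟨h1, h2⟩
    obtain ⟨hr, hdd⟩ := hpath2 c' x w y ⟨hxw, h1⟩ ⟨hwy, h2⟩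
    have := hd2 hr
    omega
  have hxC' : ∀ w ∈ C', x ≠ w ∧ χ s(x,w) ≠ c ∧ χ s(x,w) ≠ c' := by
    intro w hw
    have hxw : x ≠ w := by rintro rfl; exact hnotin hx hw
    refine ⟨hxw, ?_, ?_⟩
    · intro h
      exact hnotin (hCadj hx ⟨hxw, h⟩) hw
    · intro h
      exact hnotin hx (hC'adj hw ⟨hxw.symm, by rw [← hsy x w]; exact h⟩)
  have hyC' : ∀ w ∈ C', y ≠ w ∧ χ s(y,w) ≠ c ∧ χ s(y,w) ≠ c' := by
    intro w hw
    have hyw : y ≠ w := by rintro rfl; exact hnotin hy hw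
    refine ⟨hyw, ?_, ?_⟩
    · intro h
      exact hnotin (hCadj hy ⟨hyw, h⟩) hw
    · intro h
      exact hnotin hy (hC'adj hw ⟨hyw.symm, by rw [← hsy y w]; exact h⟩)
  set α := χ s(x,y) with hα
  obtain ⟨β, hβc, hβc', hβα, hall⟩ := fourth c c' α hcc hxyc hxyc'
  -- the residual contradiction
  have hres : ∀ v', v' ∈ C' → ∀ w : Fin n, w ≠ x → w ≠ y → w ≠ v' →
      (χ s(v',w) = c ∨ χ s(v',w) = c') →
      (χ s(x,w) = c ∨ χ s(x,w) = c') → (χ s(y,w) = c ∨ χ s(y,w) = c') → False := by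
    intro v' hv' w hwx hwy hwv' h3 h1 h2
    rcases h3 with h3 | h3
    · have hw1 : χ s(x,w) = c' := by
        rcases h1 with h1 | h1
        · exfalso
          have hwC : w ∈ C := hCadj hx ⟨Ne.symm hwx, h1⟩
          have : v' ∈ C := hCadj hwC ⟨hwv', by rw [← hsy v' w]; exact h3⟩
          exact hnotin this hv'
        · exact h1
      have hw2 : χ s(y,w) = c' := by
        rcases h2 with h2 | h2
        · exfalso
          have hwC : w ∈ C := hCadj hy ⟨Ne.symm hwy, h2⟩
          have : v' ∈ C := hCadj hwC ⟨hwv', by rw [← hsy v' w]; exact h3⟩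
          exact hnotin this hv'
        · exact h2
      exact hno2 w (Ne.symm hwx) hwy ⟨hw1, by rw [← hsy y w]; exact hw2⟩
    · have hwC' : w ∈ C' := hC'adj hv' ⟨Ne.symm hwv', h3⟩
      obtain ⟨_, hh1, hh2⟩ := hxC' w hwC'
      rcases h1 with h1 | h1
      · exact hh1 h1
      · exact hh2 h1
  by_cases hcase : ∃ v' ∈ C', χ s(x,v') ≠ χ s(y,v')
  · -- Case 1
    obtain ⟨v', hv', hpq⟩ := hcase
    obtain ⟨hxv, hpc, hpc'⟩ := hxC' v' hv'
    obtain ⟨hyv, hqc, hqc'⟩ := hyC' v' hv'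
    have hp : χ s(x,v') = α ∨ χ s(x,v') = β := by
      rcases hall (χ s(x,v')) with h|h|h|h
      · exact Or.inl h
      · exact Or.inr h
      · exact absurd h hpc
      · exact absurd h hpc'
    have hq : χ s(y,v') = α ∨ χ s(y,v') = β := by
      rcases hall (χ s(y,v')) with h|h|h|h
      · exact Or.inl h
      · exact Or.inr h
      · exact absurd h hqc
      · exact absurd h hqc'
    rcases hp with hp | hp
    · have hq' : χ s(y,v') = β := by
        rcases hq with hq | hq
        · exact absurd (hp.trans hq.symm) hpq
        · exact hq
      refine hnocover ⟨star2set χ α x y v', star2set χ β y v' v', star2set χ β x x x,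
        α, β, β, ?_, star2set_good χ α x y v' (Or.inr ⟨hxy, hα.symm⟩) (Or.inr ⟨hxv, hp⟩),
        star2set_good χ β y v' v' (Or.inr ⟨hyv, hq'⟩) (Or.inr ⟨hyv, hq'⟩),
        star2set_good χ β x x x (Or.inl rfl) (Or.inl rfl)⟩
      rw [Set.eq_univ_iff_forall]
      intro w
      by_cases hwx : w = x
      · exact mu1 (sm1 hwx)
      by_cases hwy : w = y
      · exact mu1 (sm2 hwy)
      by_cases hwv : w = v'
      · exact mu1 (sm3 hwv)
      rcases trich4 (hall (χ s(x,w))) with h1|h1|h1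
      · exact mu1 (sm4 ⟨Ne.symm hwx, h1⟩)
      · exact mu3 (sm4 ⟨Ne.symm hwx, h1⟩)
      rcases trich4 (hall (χ s(y,w))) with h2|h2|h2
      · exact mu1 (sm5 ⟨Ne.symm hwy, h2⟩)
      · exact mu2 (sm4 ⟨Ne.symm hwy, h2⟩)
      rcases trich4 (hall (χ s(v',w))) with h3|h3|h3
      · exact mu1 (sm6 ⟨Ne.symm hwv, h3⟩)
      · exact mu2 (sm5 ⟨Ne.symm hwv, h3⟩)
      · exact absurd (hres v' hv' w hwx hwy hwv h3 h1 h2) id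
    · have hq' : χ s(y,v') = α := by
        rcases hq with hq | hq
        · exact hq
        · exact absurd (hp.trans hq.symm) hpq
      refine hnocover ⟨star2set χ α y x v', star2set χ β x v' v', star2set χ β y y y,
        α, β, β, ?_,
        star2set_good χ α y x v' (Or.inr ⟨hxy.symm, by rw [← hsy x y]; try exact hα.symm⟩)
          (Or.inr ⟨hyv, hq'⟩),
        star2set_good χ β x v' v' (Or.inr ⟨hxv, hp⟩) (Or.inr ⟨hxv, hp⟩),
        star2set_good χ β y y y (Or.inl rfl) (Or.inl rfl)⟩
      rw [Set.eq_univ_iff_forall]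
      intro w
      by_cases hwx : w = x
      · exact mu1 (sm2 hwx)
      by_cases hwy : w = y
      · exact mu1 (sm1 hwy)
      by_cases hwv : w = v'
      · exact mu1 (sm3 hwv)
      rcases trich4 (hall (χ s(x,w))) with h1|h1|h1
      · exact mu1 (sm5 ⟨Ne.symm hwx, h1⟩)
      · exact mu2 (sm4 ⟨Ne.symm hwx, h1⟩)
      rcases trich4 (hall (χ s(y,w))) with h2|h2|h2
      · exact mu1 (sm4 ⟨Ne.symm hwy, h2⟩)
      · exact mu3 (sm4 ⟨Ne.symm hwy, h2⟩)
      rcases trich4 (hall (χ s(v',w))) with h3|h3|h3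
      · exact mu1 (sm6 ⟨Ne.symm hwv, h3⟩)
      · exact mu2 (sm5 ⟨Ne.symm hwv, h3⟩)
      · exact absurd (hres v' hv' w hwx hwy hwv h3 h1 h2) id
  · push_neg at hcase
    by_cases hcase2 : ∃ v' ∈ C', χ s(x,v') ≠ α
    · -- Case 2
      obtain ⟨v', hv', hβ2⟩ := hcase2
      obtain ⟨hxv, hpc, hpc'⟩ := hxC' v' hv'
      have hxv' : χ s(x,v') = β := by
        rcases hall (χ s(x,v')) with h|h|h|h
        · exact absurd h hβ2
        · exact h
        · exact absurd h hpc
        · exact absurd h hpc'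
      have hyv' : χ s(y,v') = β := (hcase v' hv').symm.trans hxv'
      obtain ⟨hyv, hyc1, hyc2⟩ := hyC' v' hv'
      refine hnocover ⟨star2set χ α x y y, star2set χ β v' x y, star2set χ α v' v' v',
        α, β, α, ?_,
        star2set_good χ α x y y (Or.inr ⟨hxy, hα.symm⟩) (Or.inr ⟨hxy, hα.symm⟩),
        star2set_good χ β v' x y (Or.inr ⟨Ne.symm hxv, by rw [← hsy x v']; exact hxv'⟩)
          (Or.inr ⟨Ne.symm hyv, by rw [← hsy y v']; exact hyv'⟩),
        star2set_good χ α v' v' v' (Or.inl rfl) (Or.inl rfl)⟩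
      rw [Set.eq_univ_iff_forall]
      intro w
      by_cases hwx : w = x
      · exact mu1 (sm1 hwx)
      by_cases hwy : w = y
      · exact mu1 (sm2 hwy)
      by_cases hwv : w = v'
      · exact mu3 (sm1 hwv)
      rcases trich4 (hall (χ s(x,w))) with h1|h1|h1
      · exact mu1 (sm4 ⟨Ne.symm hwx, h1⟩)
      · exact mu2 (sm5 ⟨Ne.symm hwx, h1⟩)
      rcases trich4 (hall (χ s(y,w))) with h2|h2|h2
      · exact mu1 (sm5 ⟨Ne.symm hwy, h2⟩)
      · exact mu2 (sm6 ⟨Ne.symm hwy, h2⟩)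
      rcases trich4 (hall (χ s(v',w))) with h3|h3|h3
      · exact mu3 (sm4 ⟨Ne.symm hwv, h3⟩)
      · exact mu2 (sm4 ⟨Ne.symm hwv, h3⟩)
      · exact absurd (hres v' hv' w hwx hwy hwv h3 h1 h2) id
    · -- Case 3
      push_neg at hcase2
      obtain ⟨v', hv'⟩ := hne
      obtain ⟨hxv, hc31, hc32⟩ := hxC' v' hv'
      refine hnocover ⟨star2set χ α x y v', star2set χ β v' v' v', star2set χ c v' v' v',
        α, β, c, ?_,
        star2set_good χ α x y v' (Or.inr ⟨hxy, hα.symm⟩) (Or.inr ⟨hxv, hcase2 v' hv'⟩),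
        star2set_good χ β v' v' v' (Or.inl rfl) (Or.inl rfl),
        star2set_good χ c v' v' v' (Or.inl rfl) (Or.inl rfl)⟩
      rw [Set.eq_univ_iff_forall]
      intro w
      by_cases hwx : w = x
      · exact mu1 (sm1 hwx)
      by_cases hwy : w = y
      · exact mu1 (sm2 hwy)
      by_cases hwv : w = v'
      · exact mu1 (sm3 hwv)
      rcases hall (χ s(v',w)) with h3|h3|h3|h3
      · exact mu1 (sm6 ⟨Ne.symm hwv, h3⟩)
      · exact mu2 (sm4 ⟨Ne.symm hwv, h3⟩)
      · exact mu3 (sm4 ⟨Ne.symm hwv, h3⟩)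
      · have hwC' : w ∈ C' := hC'adj hv' ⟨Ne.symm hwv, h3⟩
        exact mu1 (sm4 ⟨Ne.symm hwx, hcase2 w hwC'⟩)
end
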